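/- arXiv:2602.19689 — 6 statements merged into one kernel-verified Lean document; each statement's English description precedes it below -/
import Mathlib

section
/- Let I and J be finite sets, c : I → ℕ with c(i) ≥ 1, q : J → ℕ with q(j) ≥ 1, and δ : I × J → ℝ injective. Let M : I × J → {0,1} be the greedy matching obtained by processing all pairs (i,j) in strictly decreasing order of δ(i,j) and setting M(i,j) = 1 exactly when ∑_k M(i,k) < c(i) and ∑_l M(l,j) < q(j) at that point. Then M has no blocking pair: there is no pair (i,j) with M(i,j) = 0 such that both (a) ∑_{k ∈ J} M(i,k) < c(i) or there exists k ∈ J with M(i,k) = 1 and δ(i,k) < δ(i,j), and (b) ∑_{l ∈ I} M(l,j) < q(j) or there exists l ∈ I with M(l,j) = 1 and δ(l,j) < δ(i,j). -/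
section Aux
variable {I J : Type*} [Fintype I] [Fintype J] [DecidableEq I] [DecidableEq J]
variable (c : I → ℕ) (q : J → ℕ)

def gstep (A : I × J → ℕ) (p : I × J) : I × J → ℕ :=
  if (∑ k, A (p.1, k)) < c p.1 ∧ (∑ m, A (m, p.2)) < q p.2
  then Function.update A p 1 else A

lemma gstep_ne (A : I × J → ℕ) (p p' : I × J) (h : p' ≠ p) :
    gstep c q A p p' = A p' := by
  unfold gstep; split_ifs with hcond
  · exact Function.update_of_ne h 1 A
  · rfl

lemma foldl_unprocessed (A : I × J → ℕ) (L : List (I × J)) (p : I × J) (hp : p ∉ L) :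
    List.foldl (gstep c q) A L p = A p := by
  induction L generalizing A with
  | nil => rfl
  | cons x xs ih =>
      simp only [List.foldl_cons]
      rw [ih _ (fun h => hp (List.mem_cons_of_mem _ h))]
      exact gstep_ne c q A x p (fun h => hp (h ▸ (List.mem_cons_self : x ∈ x :: xs)))

lemma foldl_ne_zero (A : I × J → ℕ) (L : List (I × J)) (p : I × J) (hp : A p ≠ 0) :
    List.foldl (gstep c q) A L p ≠ 0 := by
  induction L generalizing A with
  | nil => exact hp
  | cons x xs ih =>
      simp only [List.foldl_cons]
      apply ih
      unfold gstep; split_ifs with hcond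
      · rcases eq_or_ne p x with rfl | hne
        · simp
        · rwa [Function.update_of_ne hne]
      · exact hp

lemma gstep_row (A : I × J → ℕ) (p : I × J) (i : I) (h : c i ≤ ∑ k, A (i, k)) :
    ∀ k, gstep c q A p (i, k) = A (i, k) := by
  intro k
  unfold gstep; split_ifs with hcond
  · have hne : p.1 ≠ i := by
      rintro rfl
      exact absurd hcond.1 (not_lt.mpr h)
    apply Function.update_of_ne
    intro he
    exact hne (by rw [← he])
  · rfl

lemma foldl_row (A : I × J → ℕ) (L : List (I × J)) (i : I) (h : c i ≤ ∑ k, A (i, k)) :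
    ∀ k, List.foldl (gstep c q) A L (i, k) = A (i, k) := by
  induction L generalizing A with
  | nil => intro k; rfl
  | cons x xs ih =>
      intro k
      simp only [List.foldl_cons]
      have hrow := gstep_row c q A x i h
      have hsum : c i ≤ ∑ k, gstep c q A x (i, k) := by
        rw [Finset.sum_congr rfl (fun k _ => hrow k)]; exact h
      rw [ih _ hsum k, hrow k]

lemma gstep_col (A : I × J → ℕ) (p : I × J) (j : J) (h : q j ≤ ∑ m, A (m, j)) :
    ∀ m, gstep c q A p (m, j) = A (m, j) := by
  intro m
  unfold gstep; split_ifs with hcond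
  · have hne : p.2 ≠ j := by
      rintro rfl
      exact absurd hcond.2 (not_lt.mpr h)
    apply Function.update_of_ne
    intro he
    exact hne (by rw [← he])
  · rfl

lemma foldl_col (A : I × J → ℕ) (L : List (I × J)) (j : J) (h : q j ≤ ∑ m, A (m, j)) :
    ∀ m, List.foldl (gstep c q) A L (m, j) = A (m, j) := by
  induction L generalizing A with
  | nil => intro m; rfl
  | cons x xs ih =>
      intro m
      simp only [List.foldl_cons]
      have hcol := gstep_col c q A x j h
      have hsum : q j ≤ ∑ m, gstep c q A x (m, j) := by
        rw [Finset.sum_congr rfl (fun m _ => hcol m)]; exact h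
      rw [ih _ hsum m, hcol m]

end Aux

/-- The greedy matching obtained by processing all proposer–receiver pairs in strictly
decreasing order of the (injective) dating rates `δ` has no blocking pair: there is no
unmatched pair `(i,j)` such that both `i` and `j` either have slack capacity or are matched
to a strictly worse partner (both sides rank by `δ`). -/
theorem stmt7 {I J : Type*} [Fintype I] [Fintype J] [DecidableEq I] [DecidableEq J]
    (c : I → ℕ) (hc : ∀ i, 1 ≤ c i) (q : J → ℕ) (hq : ∀ j, 1 ≤ q j)
    (δ : I × J → ℝ) (hδ : Function.Injective δ)
    (l : List (I × J)) (hl : ∀ p : I × J, p ∈ l)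
    (hsort : l.Pairwise (fun p p' => δ p' < δ p))
    (M : I × J → ℕ)
    (hM : M = l.foldl (fun A p =>
        if (∑ k, A (p.1, k)) < c p.1 ∧ (∑ m, A (m, p.2)) < q p.2
        then Function.update A p 1 else A) (fun _ => 0)) :
    ¬ ∃ (i : I) (j : J), M (i, j) = 0 ∧
      ((∑ k, M (i, k)) < c i ∨ ∃ k : J, M (i, k) = 1 ∧ δ (i, k) < δ (i, j)) ∧
      ((∑ m, M (m, j)) < q j ∨ ∃ m : I, M (m, j) = 1 ∧ δ (m, j) < δ (i, j)) := by
  have hF : (fun (A : I × J → ℕ) (p : I × J) =>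
      if (∑ k, A (p.1, k)) < c p.1 ∧ (∑ m, A (m, p.2)) < q p.2
      then Function.update A p 1 else A) = gstep c q := rfl
  rw [hF] at hM
  rintro ⟨i, j, hM0, ha, hb⟩
  obtain ⟨l₁, l₂, rfl⟩ := List.append_of_mem (hl (i, j))
  rw [List.foldl_append, List.foldl_cons] at hM
  set A : I × J → ℕ := List.foldl (gstep c q) (fun _ => 0) l₁ with hA
  -- membership in l₁ gives bigger δ
  have hbig : ∀ p ∈ l₁, δ (i, j) < δ p := by
    intro p hp
    have := (List.pairwise_append.mp hsort).2.2 p hp (i, j) List.mem_cons_self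
    exact this
  have hmem : ∀ p : I × J, A p ≠ 0 → p ∈ l₁ := by
    intro p hp
    by_contra hnot
    exact hp (foldl_unprocessed c q _ l₁ p hnot)
  -- M (i,j) = 0 forces the condition to fail at step (i,j)
  have hB0 : gstep c q A (i, j) (i, j) = 0 := by
    by_contra h
    exact (hM ▸ foldl_ne_zero c q _ l₂ (i, j) h) hM0
  have hcond : ¬ ((∑ k, A (i, k)) < c i ∧ (∑ m, A (m, j)) < q j) := by
    intro h
    rw [gstep] at hB0
    simp only [h, if_true] at hB0
    simp at hB0
  have hBA : gstep c q A (i, j) = A := by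
    rw [gstep]
    simp only [hcond, if_false]
  rw [hBA] at hM
  rcases not_and_or.mp hcond with hrow | hcol
  · -- row full: contradict condition (a)
    push_neg at hrow
    have hMA : ∀ k, M (i, k) = A (i, k) := by
      intro k
      rw [hM]
      exact foldl_row c q A l₂ i hrow k
    rcases ha with hslack | ⟨k, hk1, hkδ⟩
    · rw [Finset.sum_congr rfl (fun k _ => hMA k)] at hslack
      exact absurd hslack (not_lt.mpr hrow)
    · have : (i, k) ∈ l₁ := hmem (i, k) (by rw [← hMA k, hk1]; exact one_ne_zero)
      exact absurd hkδ (not_lt.mpr (le_of_lt (hbig _ this)))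
  · push_neg at hcol
    have hMA : ∀ m, M (m, j) = A (m, j) := by
      intro m
      rw [hM]
      exact foldl_col c q A l₂ j hcol m
    rcases hb with hslack | ⟨m, hm1, hmδ⟩
    · rw [Finset.sum_congr rfl (fun m _ => hMA m)] at hslack
      exact absurd hslack (not_lt.mpr hcol)
    · have : (m, j) ∈ l₁ := hmem (m, j) (by rw [← hMA m, hm1]; exact one_ne_zero)
      exact absurd hmδ (not_lt.mpr (le_of_lt (hbig _ this)))
end

section
/- Let I and J be finite sets, c : I → ℕ with c(i) ≥ 1, q : J → ℕ with q(j) ≥ 1, and δ : I × J → ℝ injective. Call M' : I × J → {0,1} feasible if ∑_j M'(i,j) ≤ c(i) for all i and ∑_i M'(i,j) ≤ q(j) for all j, and pairwise stable if there is no pair (i,j) with M'(i,j) = 0 such that both (a) ∑_k M'(i,k) < c(i) or some k has M'(i,k) = 1 and δ(i,k) < δ(i,j), and (b) ∑_l M'(l,j) < q(j) or some l has M'(l,j) = 1 and δ(l,j) < δ(i,j). Then every feasible pairwise stable matching M' equals the greedy matching M obtained by processing pairs in strictly decreasing order of δ and matching a pair exactly when both sides have residual capacity. -/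
private lemma foldl_apply_of_not_mem {α β : Type*}
    (g : (α → β) → α → (α → β)) (hg : ∀ A p x, x ≠ p → g A p x = A x) :
    ∀ (t : List α) (A : α → β) (x : α), x ∉ t → t.foldl g A x = A x := by
  intro t
  induction t with
  | nil => intro A x _; rfl
  | cons a t ih =>
    intro A x hx
    rw [List.foldl_cons, ih (g A a) x (fun h => hx (List.mem_cons_of_mem a h)),
      hg A a x (fun h => hx (h ▸ List.mem_cons_self (a := a) (l := t)))]

/-- With injective dating rates `δ` and capacities `c`, `q`, every feasible, pairwise stable
0–1 matching `M'` coincides with the greedy matching `M` obtained by processing pairs in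
strictly decreasing order of `δ` and matching a pair exactly when both sides have residual
capacity. -/
theorem stmt8 {I J : Type*} [Fintype I] [Fintype J] [DecidableEq I] [DecidableEq J]
    (c : I → ℕ) (hc : ∀ i, 1 ≤ c i) (q : J → ℕ) (hq : ∀ j, 1 ≤ q j)
    (δ : I × J → ℝ) (hδ : Function.Injective δ)
    (l : List (I × J)) (hl : ∀ p : I × J, p ∈ l)
    (hsort : l.Pairwise (fun p p' => δ p' < δ p))
    (M : I × J → ℕ)
    (hM : M = l.foldl (fun A p =>
        if (∑ k, A (p.1, k)) < c p.1 ∧ (∑ m, A (m, p.2)) < q p.2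
        then Function.update A p 1 else A) (fun _ => 0))
    (M' : I × J → ℕ)
    (hM'01 : ∀ p : I × J, M' p = 0 ∨ M' p = 1)
    (hfeas : (∀ i, ∑ j, M' (i, j) ≤ c i) ∧ (∀ j, ∑ i, M' (i, j) ≤ q j))
    (hstable : ¬ ∃ (i : I) (j : J), M' (i, j) = 0 ∧
      ((∑ k, M' (i, k)) < c i ∨ ∃ k : J, M' (i, k) = 1 ∧ δ (i, k) < δ (i, j)) ∧
      ((∑ m, M' (m, j)) < q j ∨ ∃ m : I, M' (m, j) = 1 ∧ δ (m, j) < δ (i, j))) :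
    M' = M := by
  classical
  by_contra hne
  set step : (I × J → ℕ) → I × J → (I × J → ℕ) := fun A p =>
    if (∑ k, A (p.1, k)) < c p.1 ∧ (∑ m, A (m, p.2)) < q p.2
    then Function.update A p 1 else A with hstepdef
  have hgstep : ∀ A p x, x ≠ p → step A p x = A x := by
    intro A p x hx
    simp only [hstepdef]
    split
    · exact Function.update_of_ne hx _ _
    · rfl
  have hnd : l.Nodup :=
    hsort.imp (fun {a b} h => by rintro rfl; exact absurd h (lt_irrefl _))
  -- pick the disagreement pair with maximal δ
  have hDne : (Finset.univ.filter (fun x => M' x ≠ M x)).Nonempty := by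
    rcases Function.ne_iff.mp hne with ⟨x, hx⟩
    exact ⟨x, by simp [hx]⟩
  obtain ⟨p, hpD, hpmax⟩ := Finset.exists_max_image _ δ hDne
  have hpne : M' p ≠ M p := by simpa using hpD
  have hagree : ∀ x, δ p < δ x → M' x = M x := by
    intro x hx
    by_contra h
    exact absurd hx (not_lt.mpr (hpmax x (by simp [h])))
  -- split the list at p
  obtain ⟨t₁, t₂, hl12⟩ := List.append_of_mem (hl p)
  rw [hl12] at hsort hnd hM
  rw [List.pairwise_append] at hsort
  rw [List.nodup_append] at hnd
  have hpt₁ : p ∉ t₁ := fun h => hnd.2.2 p h p List.mem_cons_self rfl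
  have hpt₂ : p ∉ t₂ := (List.nodup_cons.mp hnd.2.1).1
  set A₁ : I × J → ℕ := t₁.foldl step (fun _ => 0) with hA₁def
  have hMfold : M = t₂.foldl step (step A₁ p) := by
    rw [hM, List.foldl_append, List.foldl_cons]
  have hmem : ∀ x, δ p < δ x ↔ x ∈ t₁ := by
    intro x
    constructor
    · intro hx
      have hxl := hl x
      rw [hl12, List.mem_append, List.mem_cons] at hxl
      rcases hxl with h | h | h
      · exact h
      · exact absurd hx (by rw [h]; exact lt_irrefl _)
      · exact absurd hx (not_lt.mpr (le_of_lt
          ((List.pairwise_cons.mp hsort.2.1).1 x h)))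
    · intro hx
      exact hsort.2.2 x hx p List.mem_cons_self
  have hA1 : ∀ x, A₁ x = if δ p < δ x then M' x else 0 := by
    intro x
    by_cases hx : δ p < δ x
    · rw [if_pos hx, hagree x hx]
      have hxt₁ : x ∈ t₁ := (hmem x).mp hx
      have hxp : x ≠ p := fun e => hpt₁ (e ▸ hxt₁)
      have hxt₂ : x ∉ t₂ := fun h => hnd.2.2 x hxt₁ x (List.mem_cons_of_mem p h) rfl
      rw [hMfold, foldl_apply_of_not_mem step hgstep t₂ _ x hxt₂,
        hgstep A₁ p x hxp]
    · rw [if_neg hx]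
      exact foldl_apply_of_not_mem step hgstep t₁ _ x (fun h => hx ((hmem x).mpr h))
  have hMp : M p = if (∑ k, A₁ (p.1, k)) < c p.1 ∧ (∑ m, A₁ (m, p.2)) < q p.2
      then 1 else 0 := by
    rw [hMfold, foldl_apply_of_not_mem step hgstep t₂ _ p hpt₂]
    simp only [hstepdef]
    split_ifs
    · exact Function.update_self _ _ _
    · exact foldl_apply_of_not_mem step hgstep t₁ _ p hpt₁
  simp only [hA1] at hMp
  have hfle : ∀ x, (if δ p < δ x then M' x else 0) ≤ M' x := by
    intro x; split <;> simp
  have hppair : ((p.1, p.2) : I × J) = p := Prod.mk.eta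
  rcases hM'01 p with h0 | h1
  · -- M' p = 0, so M p = 1 and (p.1, p.2) blocks M'
    have hC : (∑ k, if δ p < δ (p.1, k) then M' (p.1, k) else 0) < c p.1 ∧
        (∑ m, if δ p < δ (m, p.2) then M' (m, p.2) else 0) < q p.2 := by
      by_contra h
      rw [if_neg h] at hMp
      exact hpne (h0.trans hMp.symm)
    have ha : (∑ k, M' (p.1, k)) < c p.1 ∨
        ∃ k : J, M' (p.1, k) = 1 ∧ δ (p.1, k) < δ (p.1, p.2) := by
      by_cases hlt : (∑ k, M' (p.1, k)) < c p.1
      · exact Or.inl hlt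
      · right
        have hsum : (∑ k, if δ p < δ (p.1, k) then M' (p.1, k) else 0) <
            ∑ k, M' (p.1, k) := lt_of_lt_of_le hC.1 (not_lt.mp hlt)
        obtain ⟨k, -, hk⟩ := Finset.exists_lt_of_sum_lt hsum
        refine ⟨k, ?_, ?_⟩
        · rcases hM'01 (p.1, k) with h | h
          · rw [h] at hk; simp at hk
          · exact h
        · have hnlt : ¬ δ p < δ (p.1, k) := by
            intro h; rw [if_pos h] at hk; exact lt_irrefl _ hk
          have hne' : (p.1, k) ≠ p := by
            intro e
            rcases hM'01 (p.1, k) with h | h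
            · rw [h] at hk; simp at hk
            · rw [e, h0] at h; exact one_ne_zero h.symm
          rw [hppair]
          exact lt_of_le_of_ne (not_lt.mp hnlt) (fun e => hne' (hδ e))
    have hb : (∑ m, M' (m, p.2)) < q p.2 ∨
        ∃ m : I, M' (m, p.2) = 1 ∧ δ (m, p.2) < δ (p.1, p.2) := by
      by_cases hlt : (∑ m, M' (m, p.2)) < q p.2
      · exact Or.inl hlt
      · right
        have hsum : (∑ m, if δ p < δ (m, p.2) then M' (m, p.2) else 0) <
            ∑ m, M' (m, p.2) := lt_of_lt_of_le hC.2 (not_lt.mp hlt)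
        obtain ⟨m, -, hk⟩ := Finset.exists_lt_of_sum_lt hsum
        refine ⟨m, ?_, ?_⟩
        · rcases hM'01 (m, p.2) with h | h
          · rw [h] at hk; simp at hk
          · exact h
        · have hnlt : ¬ δ p < δ (m, p.2) := by
            intro h; rw [if_pos h] at hk; exact lt_irrefl _ hk
          have hne' : (m, p.2) ≠ p := by
            intro e
            rcases hM'01 (m, p.2) with h | h
            · rw [h] at hk; simp at hk
            · rw [e, h0] at h; exact one_ne_zero h.symm
          rw [hppair]
          exact lt_of_le_of_ne (not_lt.mp hnlt) (fun e => hne' (hδ e))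
    exact hstable ⟨p.1, p.2, by rw [hppair]; exact h0, ha, hb⟩
  · -- M' p = 1, so M p = 0, and one side of the greedy condition fails
    have hC : ¬ ((∑ k, if δ p < δ (p.1, k) then M' (p.1, k) else 0) < c p.1 ∧
        (∑ m, if δ p < δ (m, p.2) then M' (m, p.2) else 0) < q p.2) := by
      intro h
      rw [if_pos h] at hMp
      exact hpne (h1.trans hMp.symm)
    have hf0 : (if δ p < δ ((p.1 : I), (p.2 : J)) then M' (p.1, p.2) else 0) = 0 := by
      rw [hppair, if_neg (lt_irrefl _)]
    rcases not_and_or.mp hC with h | h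
    · have hstrict : (∑ k, if δ p < δ (p.1, k) then M' (p.1, k) else 0) <
          ∑ k, M' (p.1, k) := by
        refine Finset.sum_lt_sum (fun k _ => hfle _) ⟨p.2, Finset.mem_univ _, ?_⟩
        rw [hf0, hppair, h1]; exact Nat.zero_lt_one
      exact absurd (lt_of_le_of_lt (not_lt.mp h) hstrict)
        (not_lt.mpr (hfeas.1 p.1))
    · have hstrict : (∑ m, if δ p < δ (m, p.2) then M' (m, p.2) else 0) <
          ∑ m, M' (m, p.2) := by
        refine Finset.sum_lt_sum (fun m _ => hfle _) ⟨p.1, Finset.mem_univ _, ?_⟩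
        rw [hf0, hppair, h1]; exact Nat.zero_lt_one
      exact absurd (lt_of_le_of_lt (not_lt.mp h) hstrict)
        (not_lt.mpr (hfeas.2 p.2))
end

section
/- Let I and J be finite sets, c : I → ℕ with c(i) ≥ 1, q : J → ℝ with q(j) ≥ 0, w : I × J → ℝ with w(i,j) > 0, and δ : I × J → ℝ injective. Let M : I × J → ℝ be the output of the exposure-constrained greedy algorithm that processes all pairs (i,j) in strictly decreasing order of δ(i,j) and at each step sets M(i,j) = min{1, c(i) − ∑_k M(i,k), (q(j) − ∑_l w(l,j)·M(l,j))/w(i,j)} using current values. Then for every pair (i,j), at least one of the following holds for the final M: M(i,j) = 1, or ∑_{k ∈ J} M(i,k) = c(i), or ∑_{l ∈ I} w(l,j)·M(l,j) = q(j). -/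
namespace Stmt10Aux

variable {I J : Type*} [Fintype I] [Fintype J] [DecidableEq I] [DecidableEq J]

noncomputable def gstep (c : I → ℕ) (q : J → ℝ) (w : I × J → ℝ)
    (A : I × J → ℝ) (p : I × J) : I × J → ℝ :=
  Function.update A p
    (min 1 (min ((c p.1 : ℝ) - ∑ k, A (p.1, k))
      ((q p.2 - ∑ m, w (m, p.2) * A (m, p.2)) / w p)))

lemma sum_update_fst (A : I × J → ℝ) (p : I × J) (v : ℝ) (i : I) :
    ∑ k, Function.update A p v (i, k) =
      (∑ k, A (i, k)) + (if i = p.1 then v - A p else 0) := by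
  obtain ⟨i₀, j₀⟩ := p
  by_cases h : i = i₀
  · subst h
    simp only [if_pos rfl]
    have he : (fun k => Function.update A (i, j₀) v (i, k))
        = Function.update (fun k => A (i, k)) j₀ v := by
      funext k
      by_cases hk : k = j₀
      · subst hk; simp
      · rw [Function.update_of_ne (by simp [hk]), Function.update_of_ne hk]
    calc ∑ k, Function.update A (i, j₀) v (i, k)
        = ∑ k, Function.update (fun k => A (i, k)) j₀ v k := by rw [he]
      _ = _ := by
          rw [Finset.sum_update_of_mem (Finset.mem_univ j₀),
            Finset.sum_eq_sum_sdiff_singleton_add (Finset.mem_univ j₀) (fun k => A (i, k))]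
          simp only [if_true]
          ring
  · simp only [if_neg h, add_zero]
    refine Finset.sum_congr rfl fun k _ => ?_
    exact Function.update_of_ne (by simp [h]) _ _

lemma sum_update_snd (w : I × J → ℝ) (A : I × J → ℝ) (p : I × J) (v : ℝ) (j : J) :
    ∑ m, w (m, j) * Function.update A p v (m, j) =
      (∑ m, w (m, j) * A (m, j)) + (if j = p.2 then w p * (v - A p) else 0) := by
  obtain ⟨i₀, j₀⟩ := p
  by_cases h : j = j₀
  · subst h
    simp only [if_pos rfl]
    have he : (fun m => w (m, j) * Function.update A (i₀, j) v (m, j))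
        = Function.update (fun m => w (m, j) * A (m, j)) i₀ (w (i₀, j) * v) := by
      funext m
      by_cases hm : m = i₀
      · subst hm; simp
      · rw [Function.update_of_ne (by simp [hm]), Function.update_of_ne hm]
    calc ∑ m, w (m, j) * Function.update A (i₀, j) v (m, j)
        = ∑ m, Function.update (fun m => w (m, j) * A (m, j)) i₀ (w (i₀, j) * v) m := by
          rw [he]
      _ = _ := by
          rw [Finset.sum_update_of_mem (Finset.mem_univ i₀),
            Finset.sum_eq_sum_sdiff_singleton_add (Finset.mem_univ i₀)
              (fun m => w (m, j) * A (m, j))]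
          simp only [if_true]
          ring
  · simp only [if_neg h, add_zero]
    refine Finset.sum_congr rfl fun m _ => ?_
    rw [Function.update_of_ne (by simp [h])]

def GInv (c : I → ℕ) (q : J → ℝ) (w : I × J → ℝ) (l : List (I × J)) (A : I × J → ℝ) : Prop :=
  (∀ i, ∑ k, A (i, k) ≤ c i) ∧ (∀ j, ∑ m, w (m, j) * A (m, j) ≤ q j) ∧
    (∀ p, 0 ≤ A p) ∧ (∀ p ∈ l, A p = 0)

variable {c : I → ℕ} {q : J → ℝ} {w : I × J → ℝ}

lemma val_nonneg (hw : ∀ p, 0 < w p) {l : List (I × J)} {A : I × J → ℝ}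
    (hInv : GInv c q w l A) (p : I × J) :
    0 ≤ min 1 (min ((c p.1 : ℝ) - ∑ k, A (p.1, k))
      ((q p.2 - ∑ m, w (m, p.2) * A (m, p.2)) / w p)) := by
  obtain ⟨h1, h2, _, _⟩ := hInv
  have ha : (0:ℝ) ≤ (c p.1 : ℝ) - ∑ k, A (p.1, k) := by linarith [h1 p.1]
  have hb : (0:ℝ) ≤ (q p.2 - ∑ m, w (m, p.2) * A (m, p.2)) / w p :=
    div_nonneg (by linarith [h2 p.2]) (le_of_lt (hw p))
  exact le_min (by norm_num) (le_min ha hb)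

lemma gstep_inv (hw : ∀ p, 0 < w p) {p : I × J} {l : List (I × J)} {A : I × J → ℝ}
    (hInv : GInv c q w (p :: l) A) (hpl : p ∉ l) :
    GInv c q w l (gstep c q w A p) := by
  obtain ⟨h1, h2, h3, h4⟩ := hInv
  set v := min 1 (min ((c p.1 : ℝ) - ∑ k, A (p.1, k))
    ((q p.2 - ∑ m, w (m, p.2) * A (m, p.2)) / w p)) with hv
  have hv0 : 0 ≤ v := val_nonneg hw ⟨h1, h2, h3, h4⟩ p
  have hva : v ≤ (c p.1 : ℝ) - ∑ k, A (p.1, k) :=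
    le_trans (min_le_right _ _) (min_le_left _ _)
  have hvb : v ≤ (q p.2 - ∑ m, w (m, p.2) * A (m, p.2)) / w p :=
    le_trans (min_le_right _ _) (min_le_right _ _)
  have hAp : A p = 0 := h4 p (List.mem_cons_self)
  refine ⟨?_, ?_, ?_, ?_⟩
  · intro i
    rw [gstep, sum_update_fst]
    by_cases h : i = p.1
    · rw [if_pos h, hAp, sub_zero, ← hv, h]
      linarith [hva]
    · rw [if_neg h, add_zero]; exact h1 i
  · intro j
    rw [gstep, sum_update_snd]
    by_cases h : j = p.2
    · rw [if_pos h, hAp, sub_zero, ← hv, h]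
      have := (le_div_iff₀ (hw p)).mp hvb
      nlinarith [hw p]
    · rw [if_neg h, add_zero]; exact h2 j
  · intro p'
    rw [gstep, Function.update_apply]
    split
    · exact hv0
    · exact h3 p'
  · intro p' hp'
    rw [gstep, Function.update_of_ne (by rintro rfl; exact hpl hp')]
    exact h4 p' (List.mem_cons_of_mem _ hp')

lemma foldl_stable {l : List (I × J)} {A : I × J → ℝ} {p : I × J} (hp : p ∉ l) :
    l.foldl (gstep c q w) A p = A p := by
  induction l generalizing A with
  | nil => rfl
  | cons p₀ t ih =>
      simp only [List.foldl_cons]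
      rw [ih (fun h => hp (List.mem_cons_of_mem _ h))]
      exact Function.update_of_ne (fun h => hp (by rw [h]; exact List.mem_cons_self)) _ _

lemma row_sat (hw : ∀ p, 0 < w p) {l : List (I × J)} {A : I × J → ℝ}
    (hInv : GInv c q w l A) (hnd : l.Nodup) (i : I)
    (hrow : ∑ k, A (i, k) = c i) :
    ∑ k, (l.foldl (gstep c q w) A) (i, k) = c i := by
  induction l generalizing A with
  | nil => simpa using hrow
  | cons p t ih =>
      have hpt : p ∉ t := (List.nodup_cons.mp hnd).1
      have hInv' := gstep_inv hw hInv hpt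
      simp only [List.foldl_cons]
      refine ih hInv' (List.nodup_cons.mp hnd).2 ?_
      rw [gstep, sum_update_fst]
      by_cases h : i = p.1
      · subst h
        have hAp : A p = 0 := hInv.2.2.2 p (List.mem_cons_self)
        have hva : (c p.1 : ℝ) - ∑ k, A (p.1, k) = 0 := by rw [hrow]; ring
        have hb : (0:ℝ) ≤ (q p.2 - ∑ m, w (m, p.2) * A (m, p.2)) / w p :=
          div_nonneg (by linarith [hInv.2.1 p.2]) (le_of_lt (hw p))
        have hv : min 1 (min ((c p.1 : ℝ) - ∑ k, A (p.1, k))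
            ((q p.2 - ∑ m, w (m, p.2) * A (m, p.2)) / w p)) = 0 := by
          rw [hva]
          rw [min_eq_left hb]
          norm_num
        rw [if_pos rfl, hv, hAp]
        simpa using hrow
      · simpa [if_neg h] using hrow

lemma col_sat (hw : ∀ p, 0 < w p) {l : List (I × J)} {A : I × J → ℝ}
    (hInv : GInv c q w l A) (hnd : l.Nodup) (j : J)
    (hcol : ∑ m, w (m, j) * A (m, j) = q j) :
    ∑ m, w (m, j) * (l.foldl (gstep c q w) A) (m, j) = q j := by
  induction l generalizing A with
  | nil => simpa using hcol
  | cons p t ih =>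
      have hpt : p ∉ t := (List.nodup_cons.mp hnd).1
      have hInv' := gstep_inv hw hInv hpt
      simp only [List.foldl_cons]
      refine ih hInv' (List.nodup_cons.mp hnd).2 ?_
      rw [gstep, sum_update_snd]
      by_cases h : j = p.2
      · subst h
        have hAp : A p = 0 := hInv.2.2.2 p (List.mem_cons_self)
        have hvb : (q p.2 - ∑ m, w (m, p.2) * A (m, p.2)) / w p = 0 := by
          rw [hcol]; simp
        have ha : (0:ℝ) ≤ (c p.1 : ℝ) - ∑ k, A (p.1, k) := by linarith [hInv.1 p.1]
        have hv : min 1 (min ((c p.1 : ℝ) - ∑ k, A (p.1, k))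
            ((q p.2 - ∑ m, w (m, p.2) * A (m, p.2)) / w p)) = 0 := by
          rw [hvb, min_eq_right ha]
          norm_num
        rw [if_pos rfl, hv, hAp]
        simpa using hcol
      · simpa [if_neg h] using hcol

lemma main_lemma (hw : ∀ p, 0 < w p) :
    ∀ (l : List (I × J)) (A : I × J → ℝ), GInv c q w l A → l.Nodup →
      ∀ p ∈ l, (l.foldl (gstep c q w) A) p = 1 ∨
        (∑ k, (l.foldl (gstep c q w) A) (p.1, k)) = c p.1 ∨
        (∑ m, w (m, p.2) * (l.foldl (gstep c q w) A) (m, p.2)) = q p.2 := by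
  intro l
  induction l with
  | nil => intro A _ _ p hp; simp at hp
  | cons p₀ t ih =>
      intro A hInv hnd p hp
      have hpt : p₀ ∉ t := (List.nodup_cons.mp hnd).1
      have hndt : t.Nodup := (List.nodup_cons.mp hnd).2
      have hInv' := gstep_inv hw hInv hpt
      simp only [List.foldl_cons]
      rcases List.mem_cons.mp hp with rfl | hp'
      · -- p is the head
        have hAp : A p = 0 := hInv.2.2.2 p (List.mem_cons_self)
        set v := min 1 (min ((c p.1 : ℝ) - ∑ k, A (p.1, k))
          ((q p.2 - ∑ m, w (m, p.2) * A (m, p.2)) / w p)) with hvdef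
        rcases min_choice 1 (min ((c p.1 : ℝ) - ∑ k, A (p.1, k))
            ((q p.2 - ∑ m, w (m, p.2) * A (m, p.2)) / w p)) with h1 | h23
        · left
          rw [foldl_stable hpt, gstep, Function.update_self]
          exact h1
        · rcases min_choice ((c p.1 : ℝ) - ∑ k, A (p.1, k))
              ((q p.2 - ∑ m, w (m, p.2) * A (m, p.2)) / w p) with h2 | h3
          · right; left
            refine row_sat hw hInv' hndt p.1 ?_
            rw [gstep, sum_update_fst, if_pos rfl, hAp, sub_zero]
            rw [h23, h2]; ring
          · right; right
            refine col_sat hw hInv' hndt p.2 ?_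
            rw [gstep, sum_update_snd, if_pos rfl, hAp, sub_zero]
            rw [h23, h3, mul_comm, div_mul_cancel₀ _ (ne_of_gt (hw p))]
            ring
      · exact ih (gstep c q w A p₀) hInv' hndt p hp'

end Stmt10Aux

/-- Complementary slackness for the exposure-constrained greedy matrix: for every pair
`(i,j)`, either `M(i,j) = 1`, or the proposer's cognitive capacity is exactly saturated
(`∑_k M(i,k) = c i`), or the receiver's exposure budget is exactly saturated
(`∑_l w(l,j)·M(l,j) = q j`). -/
theorem stmt10 {I J : Type*} [Fintype I] [Fintype J] [DecidableEq I] [DecidableEq J]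
    (c : I → ℕ) (hc : ∀ i, 1 ≤ c i) (q : J → ℝ) (hq : ∀ j, 0 ≤ q j)
    (w : I × J → ℝ) (hw : ∀ p, 0 < w p)
    (δ : I × J → ℝ) (hδ : Function.Injective δ)
    (l : List (I × J)) (hl : ∀ p : I × J, p ∈ l)
    (hsort : l.Pairwise (fun p p' => δ p' < δ p))
    (M : I × J → ℝ)
    (hM : M = l.foldl (fun A p =>
        Function.update A p
          (min 1 (min ((c p.1 : ℝ) - ∑ k, A (p.1, k))
            ((q p.2 - ∑ m, w (m, p.2) * A (m, p.2)) / w p)))) (fun _ => 0)) :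
    ∀ (i : I) (j : J), M (i, j) = 1 ∨ (∑ k, M (i, k)) = c i ∨
      (∑ m, w (m, j) * M (m, j)) = q j := by
  intro i j
  have hfold : M = l.foldl (Stmt10Aux.gstep c q w) (fun _ => 0) := hM
  have hnd : l.Nodup := hsort.imp (fun h => by
    intro he; exact lt_irrefl _ (he ▸ h))
  have hInv : Stmt10Aux.GInv c q w l (fun _ => 0) := by
    refine ⟨fun i => by simpa using (Nat.cast_nonneg (c i) : (0:ℝ) ≤ c i),
      fun j => by simpa using hq j, fun p => le_refl 0, fun p _ => rfl⟩
  have := Stmt10Aux.main_lemma hw l (fun _ => 0) hInv hnd (i, j) (hl (i, j))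
  rw [← hfold] at this
  exact this
end

section
/- Let I and J be finite index sets, c : I → ℕ, and let M be a real I × J matrix with 0 ≤ M(i,j) ≤ 1 for all (i,j) and ∑_{j ∈ J} M(i,j) ≤ c(i) for every i ∈ I. Then M lies in the convex hull of the set of I × J matrices with entries in {0,1} whose row sums are at most c(i) for every i; that is, M is a finite convex combination of deterministic recommendation matrices each satisfying the same capacity constraints. -/
open Finset

lemma vec_rec {J : Type*} [Fintype J] (c : ℕ) :
    ∀ n (v : J → ℝ), (∀ j, v j ∈ Set.Icc (0:ℝ) 1) → (∑ j, v j ≤ c) →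
      (Finset.univ.filter fun j => v j ≠ 0 ∧ v j ≠ 1).card ≤ n →
      v ∈ convexHull ℝ {w : J → ℝ | (∀ j, w j = 0 ∨ w j = 1) ∧ ∑ j, w j ≤ c} := by
  classical
  intro n
  induction n with
  | zero =>
    intro v h01 hsum hcard
    have hall : ∀ j, v j = 0 ∨ v j = 1 := by
      intro j
      by_contra h
      push_neg at h
      have hj : j ∈ Finset.univ.filter fun j => v j ≠ 0 ∧ v j ≠ 1 := by
        simp [h.1, h.2]
      have := Finset.card_pos.2 ⟨j, hj⟩
      omega
    exact subset_convexHull ℝ _ ⟨hall, hsum⟩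
  | succ n ih =>
    intro v h01 hsum hcard
    by_cases hall : ∀ j, v j = 0 ∨ v j = 1
    · exact subset_convexHull ℝ _ ⟨hall, hsum⟩
    push_neg at hall
    obtain ⟨j0, h0, h1⟩ := hall
    have hx0 : 0 < v j0 := lt_of_le_of_ne (h01 j0).1 (Ne.symm h0)
    have hx1 : v j0 < 1 := lt_of_le_of_ne (h01 j0).2 h1
    set x := v j0 with hxdef
    set F := Finset.univ.filter fun j => v j ≠ 0 ∧ v j ≠ 1 with hF
    have hj0F : j0 ∈ F := by simp [hF, h0, h1]; exact ⟨h0, h1⟩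
    by_cases hex : ∃ j1, j1 ≠ j0 ∧ v j1 ≠ 0 ∧ v j1 ≠ 1
    · -- two fractional coordinates: shift mass between them
      obtain ⟨j1, hne, hy0, hy1⟩ := hex
      set y := v j1 with hydef
      have hj1F : j1 ∈ F := by simp [hF, hy0, hy1]; exact ⟨hy0, hy1⟩
      have hy0' : 0 < y := lt_of_le_of_ne (h01 j1).1 (Ne.symm hy0)
      have hy1' : y < 1 := lt_of_le_of_ne (h01 j1).2 hy1
      set d1 : ℝ := min (1 - x) y with hd1
      set d2 : ℝ := min x (1 - y) with hd2
      have hd1pos : 0 < d1 := lt_min (by linarith) hy0'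
      have hd2pos : 0 < d2 := lt_min hx0 (by linarith)
      have hd1le1 : d1 ≤ 1 - x := min_le_left _ _
      have hd1le2 : d1 ≤ y := min_le_right _ _
      have hd2le1 : d2 ≤ x := min_le_left _ _
      have hd2le2 : d2 ≤ 1 - y := min_le_right _ _
      set A : J → ℝ := fun j => if j = j0 then x + d1 else if j = j1 then y - d1 else v j with hA
      set B : J → ℝ := fun j => if j = j0 then x - d2 else if j = j1 then y + d2 else v j with hB
      have key : ∀ (w : J → ℝ), ∑ j, w j
          = w j0 + w j1 + ∑ j ∈ (Finset.univ.erase j0).erase j1, w j := by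
        intro w
        rw [← Finset.add_sum_erase _ w (Finset.mem_univ j0),
          ← Finset.add_sum_erase _ w (Finset.mem_erase.2 ⟨hne, Finset.mem_univ j1⟩)]
        ring
      have hrest : ∀ j ∈ (Finset.univ.erase j0).erase j1, A j = v j ∧ B j = v j := by
        intro j hj
        rw [Finset.mem_erase, Finset.mem_erase] at hj
        obtain ⟨hj1, hj0, -⟩ := hj
        constructor <;> simp [hA, hB, hj0, hj1]
      have eA0 : A j0 = x + d1 := by simp [hA]
      have eA1 : A j1 = y - d1 := by simp [hA, hne]
      have eB0 : B j0 = x - d2 := by simp [hB]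
      have eB1 : B j1 = y + d2 := by simp [hB, hne]
      have hsumA : ∑ j, A j = ∑ j, v j := by
        rw [key A, key v, Finset.sum_congr rfl (fun j hj => (hrest j hj).1), eA0, eA1]
        ring
      have hsumB : ∑ j, B j = ∑ j, v j := by
        rw [key B, key v, Finset.sum_congr rfl (fun j hj => (hrest j hj).2), eB0, eB1]
        ring
      have hA01 : ∀ j, A j ∈ Set.Icc (0:ℝ) 1 := by
        intro j
        by_cases hj : j = j0
        · rw [hj, eA0]; constructor <;> linarith
        by_cases hj' : j = j1
        · rw [hj', eA1]; constructor <;> linarith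
        · simpa [hA, hj, hj'] using h01 j
      have hB01 : ∀ j, B j ∈ Set.Icc (0:ℝ) 1 := by
        intro j
        by_cases hj : j = j0
        · rw [hj, eB0]; constructor <;> linarith
        by_cases hj' : j = j1
        · rw [hj', eB1]; constructor <;> linarith
        · simpa [hB, hj, hj'] using h01 j
      -- count fractional coordinates of A and B
      have hsubA : ∃ w ∈ F, (Finset.univ.filter fun j => A j ≠ 0 ∧ A j ≠ 1) ⊆ F.erase w := by
        rcases min_cases (1 - x) y with ⟨hmin, -⟩ | ⟨hmin, -⟩
        · refine ⟨j0, hj0F, fun j hj => ?_⟩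
          rw [Finset.mem_filter] at hj
          have hjne0 : j ≠ j0 := by
            rintro rfl
            exact hj.2.2 (by rw [eA0, hd1, hmin]; ring)
          have : A j = v j ∨ j = j1 := by
            by_cases hj1 : j = j1
            · exact Or.inr hj1
            · exact Or.inl (by simp [hA, hjne0, hj1])
          rcases this with h | h
          · rw [h] at hj
            exact Finset.mem_erase.2 ⟨hjne0, by simp [hF, hj.2.1, hj.2.2]⟩
          · exact Finset.mem_erase.2 ⟨hjne0, h ▸ hj1F⟩
        · refine ⟨j1, hj1F, fun j hj => ?_⟩
          rw [Finset.mem_filter] at hj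
          have hjne1 : j ≠ j1 := by
            rintro rfl
            exact hj.2.1 (by rw [eA1, hd1, hmin]; ring)
          have : A j = v j ∨ j = j0 := by
            by_cases hj0 : j = j0
            · exact Or.inr hj0
            · exact Or.inl (by simp [hA, hj0, hjne1])
          rcases this with h | h
          · rw [h] at hj
            exact Finset.mem_erase.2 ⟨hjne1, by simp [hF, hj.2.1, hj.2.2]⟩
          · exact Finset.mem_erase.2 ⟨hjne1, h ▸ hj0F⟩
      have hsubB : ∃ w ∈ F, (Finset.univ.filter fun j => B j ≠ 0 ∧ B j ≠ 1) ⊆ F.erase w := by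
        rcases min_cases x (1 - y) with ⟨hmin, -⟩ | ⟨hmin, -⟩
        · refine ⟨j0, hj0F, fun j hj => ?_⟩
          rw [Finset.mem_filter] at hj
          have hjne0 : j ≠ j0 := by
            rintro rfl
            exact hj.2.1 (by rw [eB0, hd2, hmin]; ring)
          have : B j = v j ∨ j = j1 := by
            by_cases hj1 : j = j1
            · exact Or.inr hj1
            · exact Or.inl (by simp [hB, hjne0, hj1])
          rcases this with h | h
          · rw [h] at hj
            exact Finset.mem_erase.2 ⟨hjne0, by simp [hF, hj.2.1, hj.2.2]⟩
          · exact Finset.mem_erase.2 ⟨hjne0, h ▸ hj1F⟩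
        · refine ⟨j1, hj1F, fun j hj => ?_⟩
          rw [Finset.mem_filter] at hj
          have hjne1 : j ≠ j1 := by
            rintro rfl
            exact hj.2.2 (by rw [eB1, hd2, hmin]; ring)
          have : B j = v j ∨ j = j0 := by
            by_cases hj0 : j = j0
            · exact Or.inr hj0
            · exact Or.inl (by simp [hB, hj0, hjne1])
          rcases this with h | h
          · rw [h] at hj
            exact Finset.mem_erase.2 ⟨hjne1, by simp [hF, hj.2.1, hj.2.2]⟩
          · exact Finset.mem_erase.2 ⟨hjne1, h ▸ hj0F⟩
      have hcardA : (Finset.univ.filter fun j => A j ≠ 0 ∧ A j ≠ 1).card ≤ n := by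
        obtain ⟨w, hw, hsub⟩ := hsubA
        have := Finset.card_le_card hsub
        rw [Finset.card_erase_of_mem hw] at this
        omega
      have hcardB : (Finset.univ.filter fun j => B j ≠ 0 ∧ B j ≠ 1).card ≤ n := by
        obtain ⟨w, hw, hsub⟩ := hsubB
        have := Finset.card_le_card hsub
        rw [Finset.card_erase_of_mem hw] at this
        omega
      have hAc := ih A hA01 (by rw [hsumA]; exact hsum) hcardA
      have hBc := ih B hB01 (by rw [hsumB]; exact hsum) hcardB
      have hdpos : 0 < d1 + d2 := by linarith
      have hv : v = (d2 / (d1 + d2)) • A + (d1 / (d1 + d2)) • B := by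
        funext j
        simp only [Pi.add_apply, Pi.smul_apply, smul_eq_mul]
        by_cases hj : j = j0
        · rw [hj, eA0, eB0]
          field_simp
          ring
        by_cases hj' : j = j1
        · rw [hj', eA1, eB1]
          field_simp
          ring
        · simp only [hA, hB, if_neg hj, if_neg hj']
          field_simp
          ring
      rw [hv]
      exact (convex_convexHull ℝ _) hAc hBc
        (div_nonneg hd2pos.le hdpos.le) (div_nonneg hd1pos.le hdpos.le)
        (by rw [← add_div, add_comm d2 d1, div_self hdpos.ne'])
    · -- j0 is the unique fractional coordinate
      push_neg at hex
      have hall' : ∀ j, j ≠ j0 → v j = 0 ∨ v j = 1 := by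
        intro j hj
        by_cases h : v j = 0
        · exact Or.inl h
        · exact Or.inr (hex j hj h)
      set A : J → ℝ := fun j => if j = j0 then 1 else v j with hA
      set B : J → ℝ := fun j => if j = j0 then 0 else v j with hB
      have hsplit : ∑ j, v j = x + ∑ j ∈ Finset.univ.erase j0, v j :=
        (Finset.add_sum_erase _ v (Finset.mem_univ j0)).symm
      set s : ℝ := ∑ j ∈ Finset.univ.erase j0, v j with hs
      -- s is a natural number
      obtain ⟨m, hm⟩ : ∃ m : ℕ, s = m := by
        refine ⟨((Finset.univ.erase j0).filter fun j => v j = 1).card, ?_⟩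
        rw [hs, ← Finset.sum_filter_add_sum_filter_not (Finset.univ.erase j0)
          (fun j => v j = 1)]
        have h1 : ∑ j ∈ (Finset.univ.erase j0).filter (fun j => v j = 1), v j
            = ((Finset.univ.erase j0).filter fun j => v j = 1).card := by
          rw [Finset.sum_congr rfl (fun j hj => (Finset.mem_filter.1 hj).2)]
          simp
        have h2 : ∑ j ∈ (Finset.univ.erase j0).filter (fun j => ¬ v j = 1), v j = 0 := by
          refine Finset.sum_eq_zero fun j hj => ?_
          rw [Finset.mem_filter, Finset.mem_erase] at hj
          rcases hall' j hj.1.1 with h | h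
          · exact h
          · exact absurd h hj.2
        rw [h1, h2, add_zero]
      have hsumB : ∑ j, B j = s := by
        rw [← Finset.add_sum_erase _ B (Finset.mem_univ j0), hs]
        have : ∑ j ∈ Finset.univ.erase j0, B j = ∑ j ∈ Finset.univ.erase j0, v j :=
          Finset.sum_congr rfl fun j hj => by
            simp [hB, (Finset.mem_erase.1 hj).1]
        rw [this]
        simp [hB]
      have hsumA : ∑ j, A j = 1 + s := by
        rw [← Finset.add_sum_erase _ A (Finset.mem_univ j0), hs]
        have : ∑ j ∈ Finset.univ.erase j0, A j = ∑ j ∈ Finset.univ.erase j0, v j :=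
          Finset.sum_congr rfl fun j hj => by
            simp [hA, (Finset.mem_erase.1 hj).1]
        rw [this]
        simp [hA]
      have hmc : m < c := by
        have : (m : ℝ) < c := by
          rw [← hm]
          calc (s : ℝ) < x + s := by linarith
          _ ≤ c := by rw [← hsplit]; exact hsum
        exact_mod_cast this
      have hAmem : A ∈ {w : J → ℝ | (∀ j, w j = 0 ∨ w j = 1) ∧ ∑ j, w j ≤ c} := by
        constructor
        · intro j
          by_cases hj : j = j0
          · exact Or.inr (by simp [hA, hj])
          · simpa [hA, hj] using hall' j hj
        · rw [hsumA, hm]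
          have : (1 : ℝ) + m ≤ c := by exact_mod_cast Nat.one_add_le_iff.2 hmc
          linarith
      have hBmem : B ∈ {w : J → ℝ | (∀ j, w j = 0 ∨ w j = 1) ∧ ∑ j, w j ≤ c} := by
        constructor
        · intro j
          by_cases hj : j = j0
          · exact Or.inl (by simp [hB, hj])
          · simpa [hB, hj] using hall' j hj
        · rw [hsumB]
          calc s ≤ x + s := by linarith
          _ ≤ c := by rw [← hsplit]; exact hsum
      have hv : v = x • A + (1 - x) • B := by
        funext j
        simp only [Pi.add_apply, Pi.smul_apply, smul_eq_mul]
        by_cases hj : j = j0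
        · subst hj; simp [hA, hB]; rfl
        · simp only [hA, hB, if_neg hj]; ring
      rw [hv]
      exact (convex_convexHull ℝ _) (subset_convexHull ℝ _ hAmem)
        (subset_convexHull ℝ _ hBmem) hx0.le (by linarith) (by ring)

/-- Any recommendation matrix with entries in `[0,1]` and row sums at most `c i` lies in the
convex hull of the 0–1 matrices whose row sums are at most `c i` (Birkhoff-type
decomposition into deterministic recommendations). -/
theorem stmt11 {I J : Type*} [Fintype I] [Fintype J]
    (c : I → ℕ) (M : Matrix I J ℝ)
    (hM01 : ∀ i j, M i j ∈ Set.Icc (0 : ℝ) 1)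
    (hMrow : ∀ i, ∑ j, M i j ≤ c i) :
    M ∈ convexHull ℝ {A : Matrix I J ℝ |
      (∀ i j, A i j = 0 ∨ A i j = 1) ∧ ∀ i, ∑ j, A i j ≤ c i} := by
  have hpi : {A : Matrix I J ℝ |
      (∀ i j, A i j = 0 ∨ A i j = 1) ∧ ∀ i, ∑ j, A i j ≤ c i}
      = Set.univ.pi (fun i => {w : J → ℝ | (∀ j, w j = 0 ∨ w j = 1) ∧ ∑ j, w j ≤ c i}) := by
    ext A
    refine Iff.trans ?_ (Set.mem_univ_pi (f := fun i => A i)).symm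
    exact ⟨fun h i => ⟨h.1 i, h.2 i⟩, fun h => ⟨fun i => (h i).1, fun i => (h i).2⟩⟩
  rw [hpi]
  exact mem_convexHull_pi fun i _ =>
    vec_rec (c i) _ (M i) (hM01 i) (hMrow i) le_rfl
end

section
/- Let p₁, …, p_n ∈ [0,1], let B₁, …, B_n be independent Bernoulli random variables with P(B_k = 1) = p_k, let X = ∑_{k=1}^n B_k, and set μ = ∑_{k=1}^n p_k. Let Y have the Poisson distribution with rate μ. Then ∑_{m=0}^∞ |P(X = m) − P(Y = m)| ≤ 2·∑_{k=1}^n p_k². Equivalently, the total variation distance between the law of X and the Poisson(μ) distribution is at most ∑_{k=1}^n p_k². -/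
open MeasureTheory

section LeCamAux
open Finset

noncomputable def lecamPoi (r : ℝ) (m : ℕ) : ℝ := r ^ m * Real.exp (-r) / Nat.factorial m

noncomputable def lecamBern (a : ℝ) (m : ℕ) : ℝ :=
  if m = 0 then 1 - a else if m = 1 then a else 0

lemma lecamPoi_nonneg {r : ℝ} (hr : 0 ≤ r) (m : ℕ) : 0 ≤ lecamPoi r m := by
  unfold lecamPoi; positivity

lemma lecamPoi_hasSum (r : ℝ) : HasSum (lecamPoi r) 1 := by
  have h := NormedSpace.expSeries_div_hasSum_exp r
  have h2 := h.mul_right (Real.exp (-r))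
  have : NormedSpace.exp r * Real.exp (-r) = 1 := by
    rw [← Real.exp_eq_exp_ℝ, ← Real.exp_add]; simp
  rw [this] at h2
  convert h2 using 2 with m
  · rfl
  unfold lecamPoi
  ring

lemma lecamPoi_summable (r : ℝ) : Summable (lecamPoi r) := (lecamPoi_hasSum r).summable

lemma lecamPoi_tsum (r : ℝ) : ∑' m, lecamPoi r m = 1 := (lecamPoi_hasSum r).tsum_eq

lemma lecamPoi_conv (a b : ℝ) (m : ℕ) :
    ∑ i ∈ Finset.range (m + 1), lecamPoi a i * lecamPoi b (m - i) = lecamPoi (a + b) m := by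
  unfold lecamPoi
  rw [add_pow, Finset.sum_mul, Finset.sum_div]
  refine Finset.sum_congr rfl fun i hi => ?_
  have hi' : i ≤ m := by
    have := Finset.mem_range.1 hi; omega
  have key : ((m.choose i : ℝ)) * (Nat.factorial i : ℝ) * (Nat.factorial (m - i) : ℝ)
      = (Nat.factorial m : ℝ) := by
    exact_mod_cast congrArg (Nat.cast : ℕ → ℝ) (Nat.choose_mul_factorial_mul_factorial hi')
  have h1 : (Nat.factorial i : ℝ) ≠ 0 := Nat.cast_ne_zero.2 (Nat.factorial_ne_zero i)
  have h2 : (Nat.factorial (m - i) : ℝ) ≠ 0 := Nat.cast_ne_zero.2 (Nat.factorial_ne_zero (m - i))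
  have h3 : (Nat.factorial m : ℝ) ≠ 0 := Nat.cast_ne_zero.2 (Nat.factorial_ne_zero m)
  have hexp : Real.exp (-a) * Real.exp (-b) = Real.exp (-(a + b)) := by
    rw [← Real.exp_add]; ring_nf
  rw [← hexp]
  field_simp
  linear_combination (-1 * a ^ i * b ^ (m - i)) * key

noncomputable def lecamConv (f : ℕ → ℝ) (a : ℝ) (m : ℕ) : ℝ :=
  ∑ i ∈ Finset.range (m + 1), f i * lecamBern a (m - i)

lemma lecamConv_zero (f : ℕ → ℝ) (a : ℝ) : lecamConv f a 0 = f 0 * (1 - a) := by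
  simp [lecamConv, lecamBern]

lemma lecamConv_succ (f : ℕ → ℝ) (a : ℝ) (m : ℕ) :
    lecamConv f a (m + 1) = f (m + 1) * (1 - a) + f m * a := by
  unfold lecamConv
  rw [Finset.sum_range_succ, Finset.sum_range_succ]
  have h1 : ∑ i ∈ Finset.range m, f i * lecamBern a (m + 1 - i) = 0 := by
    refine Finset.sum_eq_zero fun i hi => ?_
    have hi' : i < m := Finset.mem_range.1 hi
    have e0 : m + 1 - i ≠ 0 := by omega
    have e1 : m + 1 - i ≠ 1 := by omega
    simp [lecamBern, e0, e1]
  rw [h1]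
  have e2 : m + 1 - m = 1 := by omega
  simp [lecamBern, e2]
  ring

lemma lecamConv_diff_le (f g : ℕ → ℝ) {a : ℝ} (h0 : 0 ≤ a) (h1 : a ≤ 1) (m : ℕ) :
    |lecamConv f a m - lecamConv g a m| ≤
      |f m - g m| * (1 - a) + (if m = 0 then 0 else |f (m - 1) - g (m - 1)|) * a := by
  cases m with
  | zero =>
      rw [lecamConv_zero, lecamConv_zero, ← sub_mul, abs_mul,
        abs_of_nonneg (by linarith : (0:ℝ) ≤ 1 - a)]
      have : (0:ℝ) ≤ (if (0:ℕ) = 0 then 0 else |f (0 - 1) - g (0 - 1)|) * a := by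
        simp
      linarith
  | succ m =>
      rw [lecamConv_succ, lecamConv_succ]
      have : f (m + 1) * (1 - a) + f m * a - (g (m + 1) * (1 - a) + g m * a)
          = (f (m + 1) - g (m + 1)) * (1 - a) + (f m - g m) * a := by ring
      rw [this]
      refine le_trans (abs_add_le _ _) ?_
      simp only [Nat.succ_ne_zero, if_false, Nat.add_sub_cancel]
      rw [abs_mul, abs_mul, abs_of_nonneg (by linarith : (0:ℝ) ≤ 1 - a), abs_of_nonneg h0]

lemma lecamBern_summable (a : ℝ) : Summable (lecamBern a) := by
  apply summable_of_ne_finset_zero (s := {0, 1})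
  intro m hm
  simp only [Finset.mem_insert, Finset.mem_singleton, not_or] at hm
  simp [lecamBern, hm.1, hm.2]

lemma lecam_d_summable {a : ℝ} : Summable (fun m => |lecamBern a m - lecamPoi a m|) :=
  ((lecamBern_summable a).sub (lecamPoi_summable a)).abs

lemma lecam_single {a : ℝ} (h0 : 0 ≤ a) (h1 : a ≤ 1) :
    ∑' m, |lecamBern a m - lecamPoi a m| ≤ 2 * a ^ 2 := by
  set d := fun m => |lecamBern a m - lecamPoi a m| with hd
  have hds : Summable d := lecam_d_summable
  have hds1 : Summable (fun m => d (m + 1)) := (summable_nat_add_iff 1).2 hds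
  have hds2 : Summable (fun m => d (m + 2)) := by
    have := (summable_nat_add_iff 2).2 hds
    simpa using this
  have hps : Summable (lecamPoi a) := lecamPoi_summable a
  have hps2 : Summable (fun m => lecamPoi a (m + 2)) := by
    have := (summable_nat_add_iff 2).2 hps
    simpa using this
  have hsplit : ∑' m, d m = d 0 + (d 1 + ∑' m, d (m + 2)) := by
    rw [Summable.tsum_eq_zero_add hds, Summable.tsum_eq_zero_add hds1]
  have hd2 : ∀ m, d (m + 2) = lecamPoi a (m + 2) := by
    intro m
    have : lecamBern a (m + 2) = 0 := by simp [lecamBern]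
    rw [hd]
    simp only [this, zero_sub, abs_neg]
    exact abs_of_nonneg (lecamPoi_nonneg h0 _)
  have hpoisplit : (1:ℝ) = lecamPoi a 0 + (lecamPoi a 1 + ∑' m, lecamPoi a (m + 2)) := by
    rw [← lecamPoi_tsum a, Summable.tsum_eq_zero_add hps, Summable.tsum_eq_zero_add ((summable_nat_add_iff 1).2 hps)]
  have htail : ∑' m, d (m + 2) = 1 - lecamPoi a 0 - lecamPoi a 1 := by
    rw [tsum_congr hd2]; linarith [hpoisplit]
  rw [hsplit, htail]
  have hexp1 : 1 - a ≤ Real.exp (-a) := by linarith [Real.add_one_le_exp (-a)]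
  have hexp2 : Real.exp (-a) ≤ 1 := Real.exp_le_one_iff.2 (by linarith)
  have hp0 : lecamPoi a 0 = Real.exp (-a) := by simp [lecamPoi]
  have hp1 : lecamPoi a 1 = a * Real.exp (-a) := by simp [lecamPoi]
  have hb0 : lecamBern a 0 = 1 - a := by simp [lecamBern]
  have hd0 : d 0 = Real.exp (-a) - (1 - a) := by
    simp only [hd]
    rw [hb0, hp0, abs_sub_comm, abs_of_nonneg (by linarith)]
  have hd1 : d 1 = a - a * Real.exp (-a) := by
    have hb1 : lecamBern a 1 = a := by simp [lecamBern]
    have hae : a * Real.exp (-a) ≤ a := by nlinarith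
    simp only [hd]
    rw [hb1, hp1, abs_of_nonneg (by linarith)]
  rw [hd0, hd1, hp0, hp1]
  nlinarith [mul_nonneg h0 (by linarith : (0:ℝ) ≤ Real.exp (-a) - (1 - a))]

open ProbabilityTheory in
lemma lecam_hasSum_q {Ω : Type*} [MeasurableSpace Ω] (P : Measure Ω) [IsProbabilityMeasure P]
    {X : Ω → ℕ} (hX : Measurable X) :
    HasSum (fun m => (P {ω | X ω = m}).toReal) 1 := by
  have hAm : ∀ m : ℕ, MeasurableSet {ω | X ω = m} := fun m => hX (measurableSet_singleton m)
  have hdisj : Pairwise (Function.onFun Disjoint fun m : ℕ => {ω | X ω = m}) := by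
    intro i j hij
    simp only [Function.onFun, Set.disjoint_left, Set.mem_setOf_eq]
    intro ω hi hj
    exact hij (hi ▸ hj ▸ rfl)
  have hcover : ⋃ m : ℕ, {ω | X ω = m} = Set.univ := by
    ext ω; simp
  have hsum : ∑' m : ℕ, P {ω | X ω = m} = 1 := by
    rw [← measure_iUnion hdisj hAm, hcover, measure_univ]
  have hne : ∀ m : ℕ, P {ω | X ω = m} ≠ ⊤ := fun m => measure_ne_top P _
  have hsummable : Summable (fun m => (P {ω | X ω = m}).toReal) :=
    ENNReal.summable_toReal (by rw [hsum]; exact ENNReal.one_ne_top)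
  refine (Summable.hasSum_iff hsummable).2 ?_
  rw [← ENNReal.tsum_toReal_eq hne, hsum, ENNReal.toReal_one]

open ProbabilityTheory in
lemma lecam_q_rec {Ω : Type*} [MeasurableSpace Ω] (P : Measure Ω) [IsProbabilityMeasure P]
    {X Bj : Ω → ℕ} (hX : Measurable X) (hBj : Measurable Bj)
    (hB01 : ∀ ω, Bj ω = 0 ∨ Bj ω = 1) {a : ℝ}
    (hBp : (P {ω | Bj ω = 1}).toReal = a)
    (hind : IndepFun X Bj P) (m : ℕ) :
    (P {ω | Bj ω + X ω = m}).toReal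
      = lecamConv (fun i => (P {ω | X ω = i}).toReal) a m := by
  have hmul : ∀ i u : ℕ, P ({ω | X ω = i} ∩ {ω | Bj ω = u})
      = P {ω | X ω = i} * P {ω | Bj ω = u} := fun i u =>
    hind.measure_inter_preimage_eq_mul {i} {u} (measurableSet_singleton i)
      (measurableSet_singleton u)
  have hcompl : {ω | Bj ω = 0} = {ω | Bj ω = 1}ᶜ := by
    ext ω; rcases hB01 ω with h | h <;> simp [h]
  have hms1 : MeasurableSet {ω | Bj ω = 1} := hBj (measurableSet_singleton 1)
  have hP0 : (P {ω | Bj ω = 0}).toReal = 1 - a := by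
    rw [hcompl, measure_compl hms1 (measure_ne_top P _),
      measure_univ, ENNReal.toReal_sub_of_le prob_le_one ENNReal.one_ne_top,
      ENNReal.toReal_one, hBp]
  cases m with
  | zero =>
      have hset : {ω | Bj ω + X ω = 0} = {ω | X ω = 0} ∩ {ω | Bj ω = 0} := by
        ext ω; simp only [Set.mem_setOf_eq, Set.mem_inter_iff]; omega
      rw [hset, hmul 0 0, ENNReal.toReal_mul, hP0, lecamConv_zero]
  | succ m =>
      have hset : {ω | Bj ω + X ω = m + 1}
          = ({ω | X ω = m + 1} ∩ {ω | Bj ω = 0}) ∪ ({ω | X ω = m} ∩ {ω | Bj ω = 1}) := by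
        ext ω
        rcases hB01 ω with h | h <;> simp [Set.mem_setOf_eq, h] <;> omega
      have hdisj : Disjoint ({ω | X ω = m + 1} ∩ {ω | Bj ω = 0})
          ({ω | X ω = m} ∩ {ω | Bj ω = 1}) := by
        rw [Set.disjoint_left]
        rintro ω ⟨-, h0⟩ ⟨-, h1⟩
        simp only [Set.mem_setOf_eq] at h0 h1
        omega
      have hm2 : MeasurableSet ({ω | X ω = m} ∩ {ω | Bj ω = 1}) :=
        (hX (measurableSet_singleton m)).inter hms1
      rw [hset, measure_union hdisj hm2, hmul, hmul,
        ENNReal.toReal_add (by finiteness) (by finiteness),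
        ENNReal.toReal_mul, ENNReal.toReal_mul, hP0, hBp, lecamConv_succ]

open ProbabilityTheory in
lemma lecam_main {Ω : Type*} [MeasurableSpace Ω] (P : Measure Ω) [IsProbabilityMeasure P]
    {n : ℕ} (p : Fin n → ℝ) (hp : ∀ k, p k ∈ Set.Icc (0 : ℝ) 1)
    (B : Fin n → Ω → ℕ) (hmeas : ∀ k, Measurable (B k))
    (hB01 : ∀ k ω, B k ω = 0 ∨ B k ω = 1)
    (hBp : ∀ k, (P {ω | B k ω = 1}).toReal = p k)
    (hindep : iIndepFun B P)
    (s : Finset (Fin n)) :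
    ∑' m : ℕ, |(P {ω | (∑ k ∈ s, B k ω) = m}).toReal - lecamPoi (∑ k ∈ s, p k) m|
      ≤ 2 * ∑ k ∈ s, p k ^ 2 := by
  classical
  induction' s using Finset.induction_on with j s hj IH
  · simp only [Finset.sum_empty]
    have h0 : ∀ m : ℕ, |(P {ω | (0 : ℕ) = m}).toReal - lecamPoi 0 m| = 0 := by
      intro m
      cases m with
      | zero => simp [lecamPoi]
      | succ m => simp [lecamPoi]
    rw [tsum_congr h0]
    simp
  · obtain ⟨ha0, ha1⟩ := hp j
    set a := p j with hA
    set b := ∑ k ∈ s, p k with hb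
    have hb0 : 0 ≤ b := Finset.sum_nonneg fun k _ => (hp k).1
    set f := fun m : ℕ => (P {ω | (∑ k ∈ s, B k ω) = m}).toReal with hf
    have hXmeas : Measurable fun ω => ∑ k ∈ s, B k ω :=
      Finset.measurable_sum s fun k _ => hmeas k
    have hfsum : HasSum f 1 := lecam_hasSum_q P hXmeas
    have hfs : Summable f := hfsum.summable
    have hind2 : IndepFun (fun ω => ∑ k ∈ s, B k ω) (B j) P := by
      have h := hindep.indepFun_finsetSum_of_notMem hmeas hj
      have he : (∑ k ∈ s, B k) = fun ω => ∑ k ∈ s, B k ω := by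
        funext ω; simp
      rwa [he] at h
    have hrec : ∀ m, (P {ω | (∑ k ∈ insert j s, B k ω) = m}).toReal = lecamConv f a m := by
      intro m
      have hsi : {ω | (∑ k ∈ insert j s, B k ω) = m}
          = {ω | B j ω + (∑ k ∈ s, B k ω) = m} := by
        ext ω; simp [Finset.sum_insert hj]
      rw [hsi]
      exact lecam_q_rec P hXmeas (hmeas j) (hB01 j) (hBp j) hind2 m
    set g := lecamPoi b with hg
    have hgs : Summable g := lecamPoi_summable b
    set d := fun m : ℕ => |lecamBern a m - lecamPoi a m| with hdd
    have hds : Summable d := lecam_d_summable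
    set D := ∑' m, |f m - g m| with hD
    have hDs : Summable fun m => |f m - g m| := (hfs.sub hgs).abs
    set h2 := fun m : ℕ => (if m = 0 then 0 else |f (m - 1) - g (m - 1)|) * a with hh2
    have hh2succ : (fun m => h2 (m + 1)) = fun m => |f m - g m| * a := by
      funext m; simp [hh2]
    have hh2s : Summable h2 := by
      have h := (summable_nat_add_iff 1).2 (hDs.mul_right a)
      refine (summable_nat_add_iff 1).1 ?_
      rw [hh2succ]; exact hDs.mul_right a
    have hh2tsum : ∑' m, h2 m = D * a := by
      rw [Summable.tsum_eq_zero_add hh2s]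
      have h20 : h2 0 = 0 := by simp [hh2]
      rw [h20, zero_add]
      have : ∀ m : ℕ, h2 (m + 1) = |f m - g m| * a := fun m => congrFun hh2succ m
      rw [tsum_congr this, tsum_mul_right]
    set E1 := fun m : ℕ => |f m - g m| * (1 - a) + h2 m with hE1
    have hE1s : Summable E1 := (hDs.mul_right (1 - a)).add hh2s
    have hE1tsum : ∑' m, E1 m = D := by
      rw [hE1, Summable.tsum_add (hDs.mul_right (1 - a)) hh2s, tsum_mul_right, hh2tsum]
      ring
    have hgnorm : Summable fun m => ‖g m‖ := by
      have : (fun m => ‖g m‖) = g :=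
        funext fun m => by rw [Real.norm_eq_abs, abs_of_nonneg (lecamPoi_nonneg hb0 m)]
      rw [this]; exact hgs
    have hdnorm : Summable fun m => ‖d m‖ := by
      have : (fun m => ‖d m‖) = d := funext fun m => by rw [Real.norm_eq_abs, hdd, abs_abs]
      rw [this]; exact hds
    set E2 := fun m : ℕ => ∑ i ∈ Finset.range (m + 1), g i * d (m - i) with hE2
    have hE2s : Summable E2 :=
      (summable_norm_sum_mul_range_of_summable_norm hgnorm hdnorm).of_norm
    have hE2tsum : ∑' m, E2 m = ∑' m, d m := by
      rw [hE2, ← tsum_mul_tsum_eq_tsum_sum_range_of_summable_norm hgnorm hdnorm]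
      have : ∑' m, g m = 1 := lecamPoi_tsum b
      rw [this, one_mul]
    have hpoint : ∀ m, |(P {ω | (∑ k ∈ insert j s, B k ω) = m}).toReal - lecamPoi (b + a) m|
        ≤ E1 m + E2 m := by
      intro m
      rw [hrec m]
      have t1 : |lecamConv f a m - lecamConv g a m| ≤ E1 m := lecamConv_diff_le f g ha0 ha1 m
      have hconvg : lecamConv g a m - lecamPoi (b + a) m
          = ∑ i ∈ Finset.range (m + 1), g i * (lecamBern a (m - i) - lecamPoi a (m - i)) := by
        rw [← lecamPoi_conv b a m]
        unfold lecamConv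
        rw [← Finset.sum_sub_distrib]
        exact Finset.sum_congr rfl fun i _ => (mul_sub _ _ _).symm
      have t2 : |lecamConv g a m - lecamPoi (b + a) m| ≤ E2 m := by
        rw [hconvg]
        refine le_trans (Finset.abs_sum_le_sum_abs _ _) ?_
        refine Finset.sum_le_sum fun i _ => ?_
        rw [abs_mul, abs_of_nonneg (show (0:ℝ) ≤ g i from lecamPoi_nonneg hb0 i)]
      calc |lecamConv f a m - lecamPoi (b + a) m|
          ≤ |lecamConv f a m - lecamConv g a m| + |lecamConv g a m - lecamPoi (b + a) m| :=
            abs_sub_le _ _ _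
        _ ≤ E1 m + E2 m := add_le_add t1 t2
    have hX'meas : Measurable fun ω => ∑ k ∈ insert j s, B k ω :=
      Finset.measurable_sum _ fun k _ => hmeas k
    have hT : Summable fun m =>
        |(P {ω | (∑ k ∈ insert j s, B k ω) = m}).toReal - lecamPoi (b + a) m| :=
      ((lecam_hasSum_q P hX'meas).summable.sub (lecamPoi_summable (b + a))).abs
    have hsum_p : ∑ k ∈ insert j s, p k = b + a := by
      rw [Finset.sum_insert hj, hb, hA]; ring
    rw [hsum_p]
    calc ∑' m, |(P {ω | (∑ k ∈ insert j s, B k ω) = m}).toReal - lecamPoi (b + a) m|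
        ≤ ∑' m, (E1 m + E2 m) := Summable.tsum_le_tsum hpoint hT (hE1s.add hE2s)
      _ = D + ∑' m, d m := by rw [Summable.tsum_add hE1s hE2s, hE1tsum, hE2tsum]
      _ ≤ 2 * ∑ k ∈ s, p k ^ 2 + 2 * a ^ 2 := add_le_add IH (lecam_single ha0 ha1)
      _ = 2 * ∑ k ∈ insert j s, p k ^ 2 := by rw [Finset.sum_insert hj]; ring

end LeCamAux

/-- Le Cam's theorem: if `X = ∑ B_k` is a sum of independent Bernoulli random variables with
success probabilities `p k` and `μ = ∑ p k`, then the total variation-type distance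
`∑_m |P(X = m) − μ^m e^{−μ}/m!|` is at most `2 ∑ p k ^ 2`. -/
theorem stmt12 {Ω : Type*} [MeasurableSpace Ω] (P : Measure Ω) [IsProbabilityMeasure P]
    (n : ℕ) (p : Fin n → ℝ) (hp : ∀ k, p k ∈ Set.Icc (0 : ℝ) 1)
    (B : Fin n → Ω → ℕ) (hmeas : ∀ k, Measurable (B k))
    (hB01 : ∀ k ω, B k ω = 0 ∨ B k ω = 1)
    (hBp : ∀ k, (P {ω | B k ω = 1}).toReal = p k)
    (hindep : ProbabilityTheory.iIndepFun B P)
    (μ : ℝ) (hμ : μ = ∑ k, p k) :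
    ∑' m : ℕ, |(P {ω | (∑ k, B k ω) = m}).toReal - μ ^ m * Real.exp (-μ) / Nat.factorial m|
      ≤ 2 * ∑ k, (p k) ^ 2 := by
  have h := lecam_main P p hp B hmeas hB01 hBp hindep Finset.univ
  simpa [lecamPoi, hμ] using h
end

section
/- Let p₁, …, p_n ∈ [0,1] with μ = ∑_{k=1}^n p_k > 0, and let X = ∑_{k=1}^n B_k be the sum of independent Bernoulli random variables with P(B_k = 1) = p_k. Then |E[1/(1+X)] − (1 − e^{−μ})/μ| ≤ 2·∑_{k=1}^n p_k². -/
open MeasureTheory Finset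

noncomputable section LeCamAux

/-- discrete convolution -/
def lcCv (a b : ℕ → ℝ) (j : ℕ) : ℝ := ∑ i ∈ Finset.range (j + 1), a i * b (j - i)

/-- Poisson pmf -/
def lcPois (t : ℝ) (j : ℕ) : ℝ := Real.exp (-t) * (t ^ j / j.factorial)

/-- Bernoulli pmf -/
def lcBern (p : ℝ) (j : ℕ) : ℝ := if j = 0 then 1 - p else if j = 1 then p else 0

lemma lcExp_tsum (x : ℝ) : ∑' n : ℕ, x ^ n / n.factorial = Real.exp x := by
  rw [Real.exp_eq_exp_ℝ, NormedSpace.exp_eq_tsum_div]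

lemma lcPois_nonneg {t : ℝ} (ht : 0 ≤ t) (j : ℕ) : 0 ≤ lcPois t j := by
  unfold lcPois
  positivity

lemma lcPois_summable (t : ℝ) : Summable (lcPois t) :=
  (Real.summable_pow_div_factorial t).mul_left _

lemma lcPois_tsum {t : ℝ} : ∑' j, lcPois t j = 1 := by
  unfold lcPois
  rw [tsum_mul_left, lcExp_tsum, ← Real.exp_add]
  simp

lemma lcPois_abs_summable {t : ℝ} (ht : 0 ≤ t) :
    Summable (fun j => |lcPois t j|) := by
  simpa [abs_of_nonneg (lcPois_nonneg ht _)] using lcPois_summable t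

lemma lcBern_summable (p : ℝ) : Summable (lcBern p) := by
  apply summable_of_ne_finset_zero (s := {0, 1})
  intro j hj
  simp only [Finset.mem_insert, Finset.mem_singleton, not_or] at hj
  simp [lcBern, hj.1, hj.2]

lemma lcCv_abs_le (a b : ℕ → ℝ) (j : ℕ) :
    |lcCv a b j| ≤ lcCv (fun i => |a i|) (fun i => |b i|) j := by
  refine (Finset.abs_sum_le_sum_abs _ _).trans ?_
  apply Finset.sum_le_sum
  intro i _
  rw [abs_mul]

lemma lcCv_key {a b : ℕ → ℝ} (ha : Summable fun n => |a n|) (hb : Summable fun n => |b n|) :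
    Summable (fun j => |lcCv a b j|) ∧
      ∑' j, |lcCv a b j| ≤ (∑' n, |a n|) * ∑' n, |b n| := by
  have ha' : Summable fun n => ‖|a n|‖ := by simpa using ha
  have hb' : Summable fun n => ‖|b n|‖ := by simpa using hb
  have hS : Summable fun j => lcCv (fun i => |a i|) (fun i => |b i|) j := by
    have := summable_norm_sum_mul_range_of_summable_norm ha' hb'
    refine this.congr fun j => ?_
    rw [Real.norm_eq_abs, abs_of_nonneg]
    · rfl
    · exact Finset.sum_nonneg fun i _ => mul_nonneg (abs_nonneg _) (abs_nonneg _)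
  have hSle : Summable (fun j => |lcCv a b j|) :=
    Summable.of_nonneg_of_le (fun j => abs_nonneg _) (lcCv_abs_le a b) hS
  refine ⟨hSle, ?_⟩
  have := tsum_mul_tsum_eq_tsum_sum_range_of_summable_norm ha' hb'
  calc ∑' j, |lcCv a b j| ≤ ∑' j, lcCv (fun i => |a i|) (fun i => |b i|) j :=
        Summable.tsum_le_tsum (lcCv_abs_le a b) hSle hS
    _ = (∑' n, |a n|) * ∑' n, |b n| := this.symm

lemma lcCv_sub_right (a b c : ℕ → ℝ) (j : ℕ) :
    lcCv a (fun i => b i - c i) j = lcCv a b j - lcCv a c j := by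
  simp [lcCv, mul_sub, Finset.sum_sub_distrib]

lemma lcCv_sub_left (a a' b : ℕ → ℝ) (j : ℕ) :
    lcCv (fun i => a i - a' i) b j = lcCv a b j - lcCv a' b j := by
  simp [lcCv, sub_mul, Finset.sum_sub_distrib]

lemma lcCv_pois (s t : ℝ) (j : ℕ) : lcCv (lcPois s) (lcPois t) j = lcPois (s + t) j := by
  unfold lcCv lcPois
  rw [add_pow]
  rw [Finset.sum_div, Finset.mul_sum]
  apply Finset.sum_congr rfl
  intro i hi
  have hij : i ≤ j := Nat.lt_succ_iff.mp (Finset.mem_range.mp hi)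
  have hch : (j.choose i : ℝ) * (i.factorial * (j - i).factorial) = j.factorial := by
    rw [← mul_assoc]
    exact_mod_cast congrArg Nat.cast (Nat.choose_mul_factorial_mul_factorial hij)
  have h1 : (i.factorial : ℝ) ≠ 0 := Nat.cast_ne_zero.mpr i.factorial_ne_zero
  have h2 : ((j - i).factorial : ℝ) ≠ 0 := Nat.cast_ne_zero.mpr (j - i).factorial_ne_zero
  have h3 : (j.factorial : ℝ) ≠ 0 := Nat.cast_ne_zero.mpr j.factorial_ne_zero
  rw [neg_add, Real.exp_add]
  field_simp
  rw [← hch]; ring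

/-- the pointwise minimum of Bernoulli and Poisson pmfs -/
def lcR (p : ℝ) (j : ℕ) : ℝ := if j = 0 then 1 - p else if j = 1 then p * Real.exp (-p) else 0

lemma lcR_summable (p : ℝ) : Summable (lcR p) := by
  apply summable_of_ne_finset_zero (s := {0, 1})
  intro j hj
  simp only [Finset.mem_insert, Finset.mem_singleton, not_or] at hj
  simp [lcR, hj.1, hj.2]

lemma lcR_tsum (p : ℝ) : ∑' j, lcR p j = (1 - p) + p * Real.exp (-p) := by
  rw [tsum_eq_sum (s := {0, 1}) (by
    intro j hj
    simp only [Finset.mem_insert, Finset.mem_singleton, not_or] at hj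
    simp [lcR, hj.1, hj.2])]
  norm_num [lcR]

lemma lcStep_eq {p : ℝ} (hp0 : 0 ≤ p) (hp1 : p ≤ 1) (j : ℕ) :
    |lcBern p j - lcPois p j| = lcBern p j + lcPois p j - 2 * lcR p j := by
  have hexp_ge : 1 - p ≤ Real.exp (-p) := by
    have := Real.add_one_le_exp (-p); linarith
  have hexp_le : Real.exp (-p) ≤ 1 := by
    rw [Real.exp_le_one_iff]; linarith
  match j with
  | 0 =>
    simp only [lcBern, lcPois, lcR, if_pos rfl]
    rw [abs_of_nonpos (by simp; nlinarith)]
    simp; ring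
  | 1 =>
    simp only [lcBern, lcPois, lcR, if_neg one_ne_zero, if_pos rfl]
    rw [abs_of_nonneg (by simp; nlinarith)]
    simp; ring
  | (k+2) =>
    simp only [lcBern, lcR, if_neg (Nat.succ_ne_zero _), if_neg (by omega : ¬ k+2 = 1)]
    rw [zero_sub, abs_neg, abs_of_nonneg (lcPois_nonneg hp0 _)]
    ring

lemma lcStep {p : ℝ} (hp0 : 0 ≤ p) (hp1 : p ≤ 1) :
    Summable (fun j => |lcBern p j - lcPois p j|) ∧
      ∑' j, |lcBern p j - lcPois p j| ≤ 2 * p ^ 2 := by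
  have hsum : Summable (fun j => lcBern p j + lcPois p j - 2 * lcR p j) :=
    ((lcBern_summable p).add (lcPois_summable p)).sub ((lcR_summable p).mul_left 2)
  have hS : Summable (fun j => |lcBern p j - lcPois p j|) :=
    hsum.congr fun j => (lcStep_eq hp0 hp1 j).symm
  refine ⟨hS, ?_⟩
  have : ∑' j, |lcBern p j - lcPois p j|
      = ∑' j, (lcBern p j + lcPois p j - 2 * lcR p j) :=
    tsum_congr (lcStep_eq hp0 hp1)
  rw [this, Summable.tsum_sub ((lcBern_summable p).add (lcPois_summable p)) ((lcR_summable p).mul_left 2),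
    Summable.tsum_add (lcBern_summable p) (lcPois_summable p), tsum_mul_left, lcR_tsum, lcPois_tsum]
  have hBt : ∑' j, lcBern p j = 1 := by
    rw [tsum_eq_sum (s := {0, 1}) (by
      intro j hj
      simp only [Finset.mem_insert, Finset.mem_singleton, not_or] at hj
      simp [lcBern, hj.1, hj.2])]
    norm_num [lcBern]
  rw [hBt]
  have h1 : 1 - Real.exp (-p) ≤ p := by
    have := Real.add_one_le_exp (-p); linarith
  nlinarith [Real.exp_pos (-p)]

variable {Ω : Type*} [MeasurableSpace Ω] (P : Measure Ω) [IsProbabilityMeasure P]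

lemma lcInt {Y : Ω → ℕ} (hY : Measurable Y) {N : ℕ} (hbd : ∀ ω, Y ω ≤ N) (f : ℕ → ℝ) :
    ∫ ω, f (Y ω) ∂P = ∑ j ∈ Finset.range (N + 1), f j * (P (Y ⁻¹' {j})).toReal := by
  have hfun : ∀ ω, f (Y ω)
      = ∑ j ∈ Finset.range (N + 1), Set.indicator (Y ⁻¹' {j}) (fun _ => f j) ω := by
    intro ω
    classical
    have : ∀ j, Set.indicator (Y ⁻¹' {j}) (fun _ => f j) ω = if Y ω = j then f j else 0 := by
      intro j
      by_cases h : Y ω = j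
      · rw [if_pos h, Set.indicator_of_mem (by simp [h])]
      · rw [if_neg h, Set.indicator_of_notMem (by simp [h])]
    simp only [this]
    rw [Finset.sum_ite_eq (Finset.range (N + 1)) (Y ω) f]
    simp [Nat.lt_succ_iff, hbd ω]
  calc ∫ ω, f (Y ω) ∂P
      = ∫ ω, ∑ j ∈ Finset.range (N + 1), Set.indicator (Y ⁻¹' {j}) (fun _ => f j) ω ∂P :=
        integral_congr_ae (Filter.Eventually.of_forall hfun)
    _ = ∑ j ∈ Finset.range (N + 1), ∫ ω, Set.indicator (Y ⁻¹' {j}) (fun _ => f j) ω ∂P := by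
        apply integral_finset_sum
        intro j _
        exact Integrable.indicator (integrable_const _) (hY (measurableSet_singleton j))
    _ = ∑ j ∈ Finset.range (N + 1), f j * (P (Y ⁻¹' {j})).toReal := by
        apply Finset.sum_congr rfl
        intro j _
        rw [integral_indicator_const _ (hY (measurableSet_singleton j)), measureReal_def]
        simp [mul_comm]

lemma lcConv {n : ℕ} {B : Fin n → Ω → ℕ} (hmeas : ∀ k, Measurable (B k))
    (hindep : ProbabilityTheory.iIndepFun B P)
    {s : Finset (Fin n)} {a : Fin n} (ha : a ∉ s) (j : ℕ) :
    (P ((fun ω => ∑ k ∈ insert a s, B k ω) ⁻¹' {j})).toReal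
      = ∑ i ∈ Finset.range (j + 1),
          (P ((fun ω => ∑ k ∈ s, B k ω) ⁻¹' {i})).toReal * (P (B a ⁻¹' {j - i})).toReal := by
  set S : Ω → ℕ := fun ω => ∑ k ∈ s, B k ω with hS
  have hSmeas : Measurable S := Finset.measurable_sum s fun k _ => hmeas k
  have hind : ProbabilityTheory.IndepFun S (B a) P := by
    have := hindep.indepFun_finsetSum_of_notMem hmeas ha
    have heq : (∑ k ∈ s, B k) = S := by funext ω; simp [hS]
    rwa [heq] at this
  have hset : (fun ω => ∑ k ∈ insert a s, B k ω) ⁻¹' {j}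
      = ⋃ i ∈ Finset.range (j + 1), (S ⁻¹' {i} ∩ B a ⁻¹' {j - i}) := by
    ext ω
    simp only [Set.mem_preimage, Set.mem_singleton_iff, Set.mem_iUnion, Set.mem_inter_iff,
      Finset.mem_range, Finset.sum_insert ha]
    constructor
    · intro h
      have hSd : S ω = ∑ k ∈ s, B k ω := rfl
      refine ⟨S ω, by omega, rfl, by omega⟩
    · rintro ⟨i, hi, h1, h2⟩
      have hSd : S ω = ∑ k ∈ s, B k ω := rfl
      omega
  rw [hset, measure_biUnion_finset ?disj ?meas]
  · rw [ENNReal.toReal_sum (fun i _ =>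
      ne_of_lt (lt_of_le_of_lt (measure_mono Set.inter_subset_left) (measure_lt_top _ _)))]
    apply Finset.sum_congr rfl
    intro i _
    rw [hind.measure_inter_preimage_eq_mul _ _ (measurableSet_singleton i)
      (measurableSet_singleton (j - i)), ENNReal.toReal_mul]
  case disj =>
    intro i hi i' hi' hii
    apply Set.disjoint_left.mpr
    rintro ω ⟨h1, _⟩ ⟨h1', _⟩
    exact hii (by
      simp only [Set.mem_preimage, Set.mem_singleton_iff] at h1 h1'
      rw [← h1, ← h1'])
  case meas =>
    intro i _
    exact (hSmeas (measurableSet_singleton i)).inter (hmeas a (measurableSet_singleton (j - i)))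

lemma lcBernLaw {n : ℕ} {p : Fin n → ℝ} {B : Fin n → Ω → ℕ}
    (hmeas : ∀ k, Measurable (B k))
    (hB01 : ∀ k ω, B k ω = 0 ∨ B k ω = 1)
    (hBp : ∀ k, (P {ω | B k ω = 1}).toReal = p k) (a : Fin n) :
    (fun i => (P (B a ⁻¹' {i})).toReal) = lcBern (p a) := by
  have hone : B a ⁻¹' {1} = {ω | B a ω = 1} := by ext ω; simp
  funext i
  match i with
  | 0 =>
    have hzero : B a ⁻¹' {0} = {ω | B a ω = 1}ᶜ := by
      ext ω
      rcases hB01 a ω with h | h <;> simp [h]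
    have hm : MeasurableSet {ω | B a ω = 1} := by
      rw [← hone]; exact hmeas a (measurableSet_singleton 1)
    rw [hzero, prob_compl_eq_one_sub hm,
      ENNReal.toReal_sub_of_le prob_le_one ENNReal.one_ne_top, ENNReal.toReal_one, hBp a]
    simp [lcBern]
  | 1 =>
    rw [hone, hBp a]; simp [lcBern]
  | (k+2) =>
    have : B a ⁻¹' {k+2} = ∅ := by
      ext ω
      rcases hB01 a ω with h | h <;> simp [h]
    rw [this]
    simp [lcBern]

end LeCamAux

/-- For a Poisson binomial random variable `X = ∑ B_k` (independent Bernoullis with success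
probabilities `p k`, mean `μ = ∑ p k > 0`), the harmonic moment `E[1/(1+X)]` is within
`2 ∑ p k ^ 2` of the Poisson value `(1 − e^{−μ})/μ`. -/
theorem stmt13 {Ω : Type*} [MeasurableSpace Ω] (P : Measure Ω) [IsProbabilityMeasure P]
    (n : ℕ) (p : Fin n → ℝ) (hp : ∀ k, p k ∈ Set.Icc (0 : ℝ) 1)
    (B : Fin n → Ω → ℕ) (hmeas : ∀ k, Measurable (B k))
    (hB01 : ∀ k ω, B k ω = 0 ∨ B k ω = 1)
    (hBp : ∀ k, (P {ω | B k ω = 1}).toReal = p k)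
    (hindep : ProbabilityTheory.iIndepFun B P)
    (μ : ℝ) (hμ : μ = ∑ k, p k) (hμpos : 0 < μ) :
    |(∫ ω, (1 : ℝ) / (1 + ((∑ k, B k ω : ℕ) : ℝ)) ∂P) - (1 - Real.exp (-μ)) / μ|
      ≤ 2 * ∑ k, (p k) ^ 2 := by
  classical
  -- the law of the partial sums
  set q : Finset (Fin n) → ℕ → ℝ :=
    fun s j => (P ((fun ω => ∑ k ∈ s, B k ω) ⁻¹' {j})).toReal with hqdef
  have hq0 : ∀ s j, 0 ≤ q s j := fun s j => ENNReal.toReal_nonneg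
  have hbd : ∀ (s : Finset (Fin n)) ω, ∑ k ∈ s, B k ω ≤ s.card := by
    intro s ω
    calc ∑ k ∈ s, B k ω ≤ ∑ _k ∈ s, 1 := by
          apply Finset.sum_le_sum
          intro k _
          rcases hB01 k ω with h | h <;> omega
      _ = s.card := by simp
  have hqzero : ∀ (s : Finset (Fin n)) j, s.card < j → q s j = 0 := by
    intro s j hj
    have : (fun ω => ∑ k ∈ s, B k ω) ⁻¹' {j} = ∅ := by
      ext ω
      have := hbd s ω
      simp only [Set.mem_preimage, Set.mem_singleton_iff, Set.mem_empty_iff_false, iff_false]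
      omega
    simp [hqdef, this]
  have hqsummable : ∀ s : Finset (Fin n), Summable (q s) := by
    intro s
    apply summable_of_ne_finset_zero (s := Finset.range (s.card + 1))
    intro j hj
    exact hqzero s j (by simpa [Nat.lt_succ_iff] using hj)
  have hqmeas : ∀ s : Finset (Fin n), Measurable (fun ω => ∑ k ∈ s, B k ω) :=
    fun s => Finset.measurable_sum s fun k _ => hmeas k
  have hqtsum : ∀ s : Finset (Fin n), ∑' j, q s j = 1 := by
    intro s
    rw [tsum_eq_sum (s := Finset.range (s.card + 1)) (fun j hj =>
      hqzero s j (by simpa [Nat.lt_succ_iff] using hj))]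
    have := lcInt P (hqmeas s) (hbd s) (fun _ => (1 : ℝ))
    simp only [one_mul] at this
    rw [← this]
    simp
  have hqabs : ∀ s : Finset (Fin n), Summable (fun j => |q s j|) := by
    intro s
    exact (hqsummable s).congr fun j => (abs_of_nonneg (hq0 s j)).symm
  -- main induction: ℓ¹ bound between the law and the Poisson pmf
  have main : ∀ s : Finset (Fin n),
      Summable (fun j => |q s j - lcPois (∑ k ∈ s, p k) j|) ∧
        ∑' j, |q s j - lcPois (∑ k ∈ s, p k) j| ≤ 2 * ∑ k ∈ s, p k ^ 2 := by
    intro s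
    induction s using Finset.induction_on with
    | empty =>
      have hzero : ∀ j, |q ∅ j - lcPois (∑ k ∈ (∅ : Finset (Fin n)), p k) j| = 0 := by
        intro j
        have hq : q ∅ j = if j = 0 then 1 else 0 := by
          match j with
          | 0 =>
            have : (fun ω => ∑ k ∈ (∅ : Finset (Fin n)), B k ω) ⁻¹' {0} = Set.univ := by
              ext ω; simp
            simp [hqdef, this]
          | (k+1) =>
            have : (fun ω => ∑ k ∈ (∅ : Finset (Fin n)), B k ω) ⁻¹' {k+1} = ∅ := by
              ext ω; simp
            simp [hqdef, this]
        have hpois : lcPois (∑ k ∈ (∅ : Finset (Fin n)), p k) j = if j = 0 then 1 else 0 := by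
          rw [Finset.sum_empty]
          match j with
          | 0 => simp [lcPois]
          | (k+1) => simp [lcPois]
        rw [hq, hpois, sub_self, abs_zero]
      constructor
      · exact (summable_zero).congr fun j => (hzero j).symm
      · rw [tsum_congr hzero]
        simp
    | insert a s ha ih =>
      obtain ⟨ihS, ihB⟩ := ih
      have hpa0 : 0 ≤ p a := (hp a).1
      have hpa1 : p a ≤ 1 := (hp a).2
      have hμs0 : 0 ≤ ∑ k ∈ s, p k := Finset.sum_nonneg fun k _ => (hp k).1
      set μs := ∑ k ∈ s, p k with hμs
      -- convolution identity for the law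
      have hconv : ∀ j, q (insert a s) j = lcCv (q s) (lcBern (p a)) j := by
        intro j
        have h1 := lcConv P hmeas hindep ha j
        have h2 := lcBernLaw P hmeas hB01 hBp a
        rw [hqdef]
        simp only [lcCv]
        rw [h1]
        apply Finset.sum_congr rfl
        intro i _
        rw [← h2]
      -- decompose the difference
      have hD : ∀ j, q (insert a s) j - lcPois (∑ k ∈ insert a s, p k) j
          = lcCv (q s) (fun i => lcBern (p a) i - lcPois (p a) i) j
            + lcCv (fun i => q s i - lcPois μs i) (lcPois (p a)) j := by
        intro j
        rw [lcCv_sub_right, lcCv_sub_left, hconv j, Finset.sum_insert ha]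
        have hpp : lcPois (p a + μs) j = lcCv (lcPois μs) (lcPois (p a)) j := by
          rw [lcCv_pois, add_comm]
        rw [show (p a + ∑ x ∈ s, p x) = p a + μs from rfl, hpp]
        ring
      have hstep := lcStep hpa0 hpa1
      have K1 := lcCv_key (hqabs s) hstep.1
      have K2 := lcCv_key ihS (lcPois_abs_summable hpa0)
      have hq1 : ∑' i, |q s i| = 1 := by
        rw [tsum_congr fun i => abs_of_nonneg (hq0 s i), hqtsum s]
      have hp1' : ∑' i, |lcPois (p a) i| = 1 := by
        rw [tsum_congr fun i => abs_of_nonneg (lcPois_nonneg hpa0 i), lcPois_tsum]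
      have hb1 : ∑' j, |lcCv (q s) (fun i => lcBern (p a) i - lcPois (p a) i) j| ≤ 2 * p a ^ 2 := by
        calc _ ≤ (∑' i, |q s i|) * ∑' i, |lcBern (p a) i - lcPois (p a) i| := K1.2
          _ = ∑' i, |lcBern (p a) i - lcPois (p a) i| := by rw [hq1, one_mul]
          _ ≤ 2 * p a ^ 2 := hstep.2
      have hb2 : ∑' j, |lcCv (fun i => q s i - lcPois μs i) (lcPois (p a)) j|
          ≤ 2 * ∑ k ∈ s, p k ^ 2 := by
        calc _ ≤ (∑' i, |q s i - lcPois μs i|) * ∑' i, |lcPois (p a) i| := K2.2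
          _ = ∑' i, |q s i - lcPois μs i| := by rw [hp1', mul_one]
          _ ≤ 2 * ∑ k ∈ s, p k ^ 2 := ihB
      have habs : ∀ j, |q (insert a s) j - lcPois (∑ k ∈ insert a s, p k) j|
          ≤ |lcCv (q s) (fun i => lcBern (p a) i - lcPois (p a) i) j|
            + |lcCv (fun i => q s i - lcPois μs i) (lcPois (p a)) j| := by
        intro j
        rw [hD j]
        exact abs_add_le _ _
      have hsumadd : Summable (fun j =>
          |lcCv (q s) (fun i => lcBern (p a) i - lcPois (p a) i) j|
            + |lcCv (fun i => q s i - lcPois μs i) (lcPois (p a)) j|) := K1.1.add K2.1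
      have hDsum : Summable (fun j => |q (insert a s) j - lcPois (∑ k ∈ insert a s, p k) j|) :=
        Summable.of_nonneg_of_le (fun j => abs_nonneg _) habs hsumadd
      refine ⟨hDsum, ?_⟩
      calc ∑' j, |q (insert a s) j - lcPois (∑ k ∈ insert a s, p k) j|
          ≤ ∑' j, (|lcCv (q s) (fun i => lcBern (p a) i - lcPois (p a) i) j|
            + |lcCv (fun i => q s i - lcPois μs i) (lcPois (p a)) j|) :=
            Summable.tsum_le_tsum habs hDsum hsumadd
        _ = (∑' j, |lcCv (q s) (fun i => lcBern (p a) i - lcPois (p a) i) j|)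
            + ∑' j, |lcCv (fun i => q s i - lcPois μs i) (lcPois (p a)) j| :=
            Summable.tsum_add K1.1 K2.1
        _ ≤ 2 * p a ^ 2 + 2 * ∑ k ∈ s, p k ^ 2 := add_le_add hb1 hb2
        _ = 2 * ∑ k ∈ insert a s, p k ^ 2 := by rw [Finset.sum_insert ha]; ring
  -- specialise to s = univ
  have hμuniv : (∑ k ∈ Finset.univ, p k) = μ := hμ.symm
  have hmain := main Finset.univ
  rw [hμuniv] at hmain
  obtain ⟨hΔS, hΔb⟩ := hmain
  set f : ℕ → ℝ := fun j => 1 / (1 + (j : ℝ)) with hfdef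
  have hf0 : ∀ j, 0 ≤ f j := fun j => by
    simp only [hfdef]; positivity
  have hf1 : ∀ j, f j ≤ 1 := by
    intro j
    simp only [hfdef, one_div]
    have h1 : (1 : ℝ) ≤ 1 + (j : ℝ) := by
      have := Nat.cast_nonneg (α := ℝ) j; linarith
    calc (1 + (j : ℝ))⁻¹ ≤ 1⁻¹ := by
          apply inv_anti₀ one_pos h1
      _ = 1 := inv_one
  -- the integral equals a sum against the law
  have hNuniv : (Finset.univ : Finset (Fin n)).card = n := by simp
  have hE : ∫ ω, (1 : ℝ) / (1 + ((∑ k, B k ω : ℕ) : ℝ)) ∂P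
      = ∑ j ∈ Finset.range (n + 1), f j * q Finset.univ j := by
    exact lcInt P (hqmeas Finset.univ) (N := n)
      (fun ω => le_trans (hbd Finset.univ ω) (le_of_eq hNuniv)) f
  have hEtsum : ∑' j, f j * q Finset.univ j = ∑ j ∈ Finset.range (n + 1), f j * q Finset.univ j := by
    apply tsum_eq_sum
    intro j hj
    rw [hqzero Finset.univ j (by rw [hNuniv]; simpa [Nat.lt_succ_iff] using hj), mul_zero]
  -- the Poisson harmonic moment
  have hT : ∑' j, f j * lcPois μ j = (1 - Real.exp (-μ)) / μ := by
    have hterm : ∀ j : ℕ, f j * lcPois μ j = Real.exp (-μ) * (μ ^ j / (j + 1).factorial) := by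
      intro j
      simp only [hfdef, lcPois]
      have h1 : ((j + 1).factorial : ℝ) = (1 + (j : ℝ)) * j.factorial := by
        rw [Nat.factorial_succ]; push_cast; ring
      have h2 : (j.factorial : ℝ) ≠ 0 := Nat.cast_ne_zero.mpr j.factorial_ne_zero
      have h3 : (1 + (j : ℝ)) ≠ 0 := by positivity
      rw [h1]
      field_simp
    rw [tsum_congr hterm, tsum_mul_left]
    have hsum1 : Summable (fun j : ℕ => μ ^ j / (j + 1).factorial) := by
      apply Summable.of_nonneg_of_le (fun j => by positivity) _
        (Real.summable_pow_div_factorial μ)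
      intro j
      apply div_le_div_of_nonneg_left (by positivity) _ _
      · exact_mod_cast j.factorial_pos
      · exact_mod_cast Nat.factorial_le (Nat.le_succ j)
    have hshift : μ * ∑' j : ℕ, μ ^ j / (j + 1).factorial = Real.exp μ - 1 := by
      have hexp := lcExp_tsum μ
      have h0 := Summable.tsum_eq_zero_add (Real.summable_pow_div_factorial μ)
      rw [hexp] at h0
      rw [← tsum_mul_left]
      have : ∀ j : ℕ, μ * (μ ^ j / (j + 1).factorial) = μ ^ (j + 1) / (j + 1).factorial := by
        intro j; rw [pow_succ]; ring
      rw [tsum_congr this]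
      simp only [Nat.factorial_zero, pow_zero, Nat.cast_one] at h0
      linarith [h0]
    have hμne : μ ≠ 0 := ne_of_gt hμpos
    have : ∑' j : ℕ, μ ^ j / (j + 1).factorial = (Real.exp μ - 1) / μ := by
      field_simp
      linarith [hshift]
    rw [this]
    rw [Real.exp_neg]
    have hexppos : (0 : ℝ) < Real.exp μ := Real.exp_pos μ
    field_simp
  -- put everything together
  have hfqS : Summable (fun j => f j * q Finset.univ j) :=
    summable_of_ne_finset_zero (s := Finset.range (n + 1)) (fun j hj => by
      rw [hqzero Finset.univ j (by rw [hNuniv]; simpa [Nat.lt_succ_iff] using hj), mul_zero])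
  have hfπS : Summable (fun j => f j * lcPois μ j) := by
    apply Summable.of_nonneg_of_le
      (fun j => mul_nonneg (hf0 j) (lcPois_nonneg (le_of_lt hμpos) j)) _ (lcPois_summable μ)
    intro j
    calc f j * lcPois μ j ≤ 1 * lcPois μ j :=
          mul_le_mul_of_nonneg_right (hf1 j) (lcPois_nonneg (le_of_lt hμpos) j)
      _ = lcPois μ j := one_mul _
  have hgabs : Summable (fun j => |f j * (q Finset.univ j - lcPois μ j)|) := by
    apply Summable.of_nonneg_of_le (fun j => abs_nonneg _) _ hΔS
    intro j
    rw [abs_mul, abs_of_nonneg (hf0 j)]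
    calc f j * |q Finset.univ j - lcPois μ j| ≤ 1 * |q Finset.univ j - lcPois μ j| :=
          mul_le_mul_of_nonneg_right (hf1 j) (abs_nonneg _)
      _ = |q Finset.univ j - lcPois μ j| := one_mul _
  have hET : (∫ ω, (1 : ℝ) / (1 + ((∑ k, B k ω : ℕ) : ℝ)) ∂P) - (1 - Real.exp (-μ)) / μ
      = ∑' j, f j * (q Finset.univ j - lcPois μ j) := by
    rw [hE, ← hEtsum, ← hT, ← Summable.tsum_sub hfqS hfπS]
    apply tsum_congr
    intro j
    ring
  rw [hET]
  have h2sq : (2 : ℝ) * ∑ k, p k ^ 2 = 2 * ∑ k ∈ Finset.univ, p k ^ 2 := rfl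
  calc |∑' j, f j * (q Finset.univ j - lcPois μ j)|
      ≤ ∑' j, |f j * (q Finset.univ j - lcPois μ j)| := by
        have h := norm_tsum_le_tsum_norm (f := fun j => f j * (q Finset.univ j - lcPois μ j))
          (by simpa only [Real.norm_eq_abs] using hgabs)
        simpa only [Real.norm_eq_abs] using h
    _ ≤ ∑' j, |q Finset.univ j - lcPois μ j| := by
        apply Summable.tsum_le_tsum _ hgabs hΔS
        intro j
        rw [abs_mul, abs_of_nonneg (hf0 j)]
        calc f j * |q Finset.univ j - lcPois μ j| ≤ 1 * |q Finset.univ j - lcPois μ j| :=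
              mul_le_mul_of_nonneg_right (hf1 j) (abs_nonneg _)
          _ = |q Finset.univ j - lcPois μ j| := one_mul _
    _ ≤ 2 * ∑ k ∈ Finset.univ, p k ^ 2 := hΔb
    _ = 2 * ∑ k, p k ^ 2 := rfl
end
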